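/- arXiv:2208.11820 — 5 statements merged into one kernel-verified Lean document; each statement's English description precedes it below -/
import Mathlib

section
/- Let K be a field and let g, h ∈ K(x) be rational functions with h nonconstant. Then deg(g ∘ h) = (deg g)·(deg h). -/
/-- The degree of a rational function `f = f₁/f₂` (with `f₁, f₂` coprime) is
`max (deg f₁) (deg f₂)`. -/
noncomputable def ratDeg {K : Type*} [Field K] (f : RatFunc K) : ℕ :=
  max f.num.natDegree f.denom.natDegree

/-- The composition `g ∘ h` of rational functions: writing `g = g₁/g₂` with `g₁, g₂`
coprime, `g ∘ h = g₁(h) / g₂(h)`. -/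
noncomputable def ratComp {K : Type*} [Field K] (g h : RatFunc K) : RatFunc K :=
  Polynomial.aeval h g.num / Polynomial.aeval h g.denom

namespace Stmt2Aux

open Polynomial Finset

variable {K : Type*} [Field K]

/-- A nonconstant rational function is not a root of a nonzero polynomial over `K`. -/
theorem aux_aeval_ne_zero (h : RatFunc K) (hh : ∀ c : K, h ≠ RatFunc.C c)
    {q : K[X]} (hq : q ≠ 0) : Polynomial.aeval h q ≠ 0 := by
  intro h0
  have hint : IsIntegral K[X] h := by
    refine ⟨(q * Polynomial.C q.leadingCoeff⁻¹).map (algebraMap K K[X]),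
      (Polynomial.monic_mul_leadingCoeff_inv hq).map _, ?_⟩
    rw [← Polynomial.aeval_def, Polynomial.aeval_map_algebraMap, map_mul, h0, zero_mul]
  obtain ⟨r, hr⟩ := IsIntegrallyClosed.isIntegral_iff.mp hint
  have h2 : Polynomial.aeval r q = 0 := by
    have h3 := Polynomial.aeval_algebraMap_apply (RatFunc K) r q
    rw [hr, h0] at h3
    by_contra hne
    exact RatFunc.algebraMap_ne_zero hne h3.symm
  have h4 : q.comp r = 0 := by
    rw [Polynomial.comp, ← Polynomial.algebraMap_eq, ← Polynomial.aeval_def, h2]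
  rcases eq_or_ne q.natDegree 0 with hq0 | hq0
  · obtain ⟨c, hc⟩ := Polynomial.natDegree_eq_zero.mp hq0
    rw [← hc, Polynomial.C_comp] at h4
    exact hq (by rw [← hc, h4])
  · rcases eq_or_ne r.natDegree 0 with hr0 | hr0
    · obtain ⟨c, hc⟩ := Polynomial.natDegree_eq_zero.mp hr0
      exact hh c (by rw [← hr, ← hc, RatFunc.algebraMap_C])
    · have h5 := Polynomial.natDegree_comp (p := q) (q := r)
      rw [h4, Polynomial.natDegree_zero] at h5
      exact absurd h5.symm (Nat.mul_ne_zero hq0 hr0)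

/-- The homogenization of `p` of degree `N` evaluated at `(a, b)`. -/
noncomputable def phom (p : K[X]) (N : ℕ) (a b : K[X]) : K[X] :=
  ∑ i ∈ Finset.range (N + 1), Polynomial.C (p.coeff i) * a ^ i * b ^ (N - i)

theorem aux_aeval_mul_denom_pow (f : RatFunc K) (p : K[X]) {N : ℕ} (hN : p.natDegree ≤ N) :
    Polynomial.aeval f p * (algebraMap K[X] (RatFunc K) f.denom) ^ N
      = algebraMap K[X] (RatFunc K) (phom p N f.num f.denom) := by
  have hB : (algebraMap K[X] (RatFunc K)) f.denom ≠ 0 :=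
    RatFunc.algebraMap_ne_zero f.denom_ne_zero
  have hfB : f * algebraMap K[X] (RatFunc K) f.denom = algebraMap K[X] (RatFunc K) f.num :=
    ((div_eq_iff hB).mp (RatFunc.num_div_denom f)).symm
  rw [Polynomial.aeval_eq_sum_range' (Nat.lt_succ_of_le hN), Finset.sum_mul, phom, map_sum]
  refine Finset.sum_congr rfl fun i hi => ?_
  have hiN : i ≤ N := Nat.lt_succ_iff.mp (Finset.mem_range.mp hi)
  have hpow : (algebraMap K[X] (RatFunc K)) f.denom ^ N
      = (algebraMap K[X] (RatFunc K)) f.denom ^ i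
        * (algebraMap K[X] (RatFunc K)) f.denom ^ (N - i) := by
    rw [← pow_add, Nat.add_sub_cancel' hiN]
  have hC : algebraMap K (RatFunc K) (p.coeff i) = RatFunc.C (p.coeff i) := rfl
  rw [map_mul, map_mul, map_pow, map_pow, RatFunc.algebraMap_C, Algebra.smul_def, hC,
    ← hfB, hpow]
  ring

theorem phom_natDegree_le (p : K[X]) (N : ℕ) (a b : K[X]) :
    (phom p N a b).natDegree ≤ N * max a.natDegree b.natDegree := by
  apply Polynomial.natDegree_sum_le_of_forall_le
  intro i hi
  have hiN : i ≤ N := Nat.lt_succ_iff.mp (Finset.mem_range.mp hi)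
  calc (Polynomial.C (p.coeff i) * a ^ i * b ^ (N - i)).natDegree
      ≤ (Polynomial.C (p.coeff i) * a ^ i).natDegree + (b ^ (N - i)).natDegree :=
        Polynomial.natDegree_mul_le
    _ ≤ ((Polynomial.C (p.coeff i)).natDegree + (a ^ i).natDegree) + (b ^ (N - i)).natDegree :=
        Nat.add_le_add_right Polynomial.natDegree_mul_le _
    _ ≤ (0 + i * a.natDegree) + (N - i) * b.natDegree := by
        gcongr <;> simp [Polynomial.natDegree_C, Polynomial.natDegree_pow_le]
    _ ≤ i * max a.natDegree b.natDegree + (N - i) * max a.natDegree b.natDegree := by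
        simp only [zero_add]; gcongr <;> simp
    _ = N * max a.natDegree b.natDegree := by
        rw [← add_mul, Nat.add_sub_cancel' hiN]

theorem phom_natDegree_eq_left {a b : K[X]} (hab : b.natDegree < a.natDegree)
    {p : K[X]} (hp : p ≠ 0) {N : ℕ} (hpN : p.natDegree = N) :
    (phom p N a b).natDegree = N * a.natDegree := by
  have hcN : p.coeff N = p.leadingCoeff := by rw [← hpN]; rfl
  have hc0 : p.coeff N ≠ 0 := by rw [hcN]; exact Polynomial.leadingCoeff_ne_zero.mpr hp
  have ha : a ≠ 0 := by
    intro h0; rw [h0, Polynomial.natDegree_zero] at hab; omega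
  rcases Nat.eq_zero_or_pos N with hN0 | hN0
  · subst hN0
    simp [phom]
  have hmain : (Polynomial.C (p.coeff N) * a ^ N * b ^ (N - N)).natDegree = N * a.natDegree := by
    rw [Nat.sub_self, pow_zero, mul_one, Polynomial.natDegree_C_mul hc0,
      Polynomial.natDegree_pow]
  rw [phom, Finset.sum_range_succ, Polynomial.natDegree_add_eq_right_of_natDegree_lt, hmain]
  rw [hmain]
  have hda : 1 ≤ a.natDegree := by omega
  have hrest : (∑ i ∈ Finset.range N,
      Polynomial.C (p.coeff i) * a ^ i * b ^ (N - i)).natDegree ≤ N * a.natDegree - 1 := by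
    apply Polynomial.natDegree_sum_le_of_forall_le
    intro i hi
    have hiN : i < N := Finset.mem_range.mp hi
    have hb1 : (Polynomial.C (p.coeff i) * a ^ i * b ^ (N - i)).natDegree
        ≤ i * a.natDegree + (N - i) * b.natDegree := by
      calc (Polynomial.C (p.coeff i) * a ^ i * b ^ (N - i)).natDegree
          ≤ (Polynomial.C (p.coeff i) * a ^ i).natDegree + (b ^ (N - i)).natDegree :=
            Polynomial.natDegree_mul_le
        _ ≤ ((Polynomial.C (p.coeff i)).natDegree + (a ^ i).natDegree) + (b ^ (N - i)).natDegree :=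
            Nat.add_le_add_right Polynomial.natDegree_mul_le _
        _ ≤ (0 + i * a.natDegree) + (N - i) * b.natDegree := by
            gcongr <;> simp [Polynomial.natDegree_pow_le]
        _ = _ := by rw [zero_add]
    have hlt : i * a.natDegree + (N - i) * b.natDegree < N * a.natDegree := by
      have h1 : (N - i) * b.natDegree < (N - i) * a.natDegree := by
        have : 0 < N - i := by omega
        exact mul_lt_mul_of_pos_left hab this
      have h2 : i * a.natDegree + (N - i) * a.natDegree = N * a.natDegree := by
        rw [← add_mul, Nat.add_sub_cancel' (le_of_lt hiN)]
      omega
    omega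
  have hNa : 1 ≤ N * a.natDegree := by
    have := Nat.mul_le_mul hN0 hda
    omega
  omega

theorem phom_reflect (p : K[X]) (N : ℕ) (a b : K[X]) :
    phom p N a b = phom (p.reflect N) N b a := by
  rw [phom, phom, ← Finset.sum_range_reflect]
  refine Finset.sum_congr rfl fun i hi => ?_
  have hiN : i ≤ N := Nat.lt_succ_iff.mp (Finset.mem_range.mp hi)
  rw [Polynomial.coeff_reflect, Polynomial.revAt_le hiN]
  simp only [Nat.add_sub_cancel]
  rw [Nat.sub_sub_self hiN]
  ring

theorem natDegree_reflect_le {p : K[X]} {N : ℕ} (h : p.natDegree ≤ N) :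
    (p.reflect N).natDegree ≤ N := by
  apply Polynomial.natDegree_le_iff_coeff_eq_zero.mpr
  intro i hi
  rw [Polynomial.coeff_reflect, Polynomial.revAt_eq_self_of_lt hi]
  apply Polynomial.coeff_eq_zero_of_natDegree_lt
  omega

theorem natDegree_reflect_eq {p : K[X]} {N : ℕ} (h : p.natDegree ≤ N) (h0 : p.coeff 0 ≠ 0) :
    (p.reflect N).natDegree = N := by
  refine le_antisymm (natDegree_reflect_le h) ?_
  apply Polynomial.le_natDegree_of_ne_zero
  rw [Polynomial.coeff_reflect, Polynomial.revAt_le (le_refl N), Nat.sub_self]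
  exact h0

theorem phom_natDegree_eq_of_eval {a b : K[X]} (ha : a ≠ 0) (hb : b ≠ 0)
    (hm : a.natDegree = b.natDegree) (p : K[X]) {N : ℕ} (hpN : p.natDegree ≤ N)
    (hev : p.eval (a.leadingCoeff / b.leadingCoeff) ≠ 0) :
    (phom p N a b).natDegree = N * b.natDegree := by
  have hla : a.leadingCoeff ≠ 0 := Polynomial.leadingCoeff_ne_zero.mpr ha
  have hlb : b.leadingCoeff ≠ 0 := Polynomial.leadingCoeff_ne_zero.mpr hb
  have hcoeff : (phom p N a b).coeff (N * b.natDegree) =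
      ∑ i ∈ Finset.range (N + 1),
        p.coeff i * a.leadingCoeff ^ i * b.leadingCoeff ^ (N - i) := by
    rw [phom, Polynomial.finset_sum_coeff]
    refine Finset.sum_congr rfl fun i hi => ?_
    have hiN : i ≤ N := Nat.lt_succ_iff.mp (Finset.mem_range.mp hi)
    have hdeg : (a ^ i * b ^ (N - i)).natDegree = N * b.natDegree := by
      rw [Polynomial.natDegree_mul (pow_ne_zero _ ha) (pow_ne_zero _ hb),
        Polynomial.natDegree_pow, Polynomial.natDegree_pow, hm,
        ← add_mul, Nat.add_sub_cancel' hiN]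
    rw [mul_assoc, Polynomial.coeff_C_mul, ← hdeg, Polynomial.coeff_natDegree,
      Polynomial.leadingCoeff_mul, Polynomial.leadingCoeff_pow, Polynomial.leadingCoeff_pow,
      ← mul_assoc]
  have hsum : (∑ i ∈ Finset.range (N + 1),
      p.coeff i * a.leadingCoeff ^ i * b.leadingCoeff ^ (N - i))
      = b.leadingCoeff ^ N * p.eval (a.leadingCoeff / b.leadingCoeff) := by
    rw [Polynomial.eval_eq_sum_range' (Nat.lt_succ_of_le hpN), Finset.mul_sum]
    refine Finset.sum_congr rfl fun i hi => ?_
    have hiN : i ≤ N := Nat.lt_succ_iff.mp (Finset.mem_range.mp hi)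
    have key : b.leadingCoeff ^ N = b.leadingCoeff ^ (N - i) * b.leadingCoeff ^ i := by
      rw [← pow_add, Nat.sub_add_cancel hiN]
    rw [eq_comm, key, div_pow]
    calc b.leadingCoeff ^ (N - i) * b.leadingCoeff ^ i *
          (p.coeff i * (a.leadingCoeff ^ i / b.leadingCoeff ^ i))
        = b.leadingCoeff ^ (N - i) * p.coeff i *
          (a.leadingCoeff ^ i / b.leadingCoeff ^ i * b.leadingCoeff ^ i) := by ring
      _ = b.leadingCoeff ^ (N - i) * p.coeff i * a.leadingCoeff ^ i := by
          rw [div_mul_cancel₀ _ (pow_ne_zero i hlb)]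
      _ = p.coeff i * a.leadingCoeff ^ i * b.leadingCoeff ^ (N - i) := by ring
  have hne : (phom p N a b).coeff (N * b.natDegree) ≠ 0 := by
    rw [hcoeff, hsum]
    exact mul_ne_zero (pow_ne_zero _ hlb) hev
  refine le_antisymm ?_ (Polynomial.le_natDegree_of_ne_zero hne)
  have := phom_natDegree_le p N a b
  rwa [hm, max_self] at this

theorem aux_ratDeg_div {P Q : K[X]} (hQ : Q ≠ 0) (hPQ : IsCoprime P Q) :
    ratDeg (algebraMap K[X] (RatFunc K) P / algebraMap K[X] (RatFunc K) Q)
      = max P.natDegree Q.natDegree := by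
  classical
  have hg : IsUnit (gcd P Q) := (gcd_isUnit_iff P Q).mpr hPQ
  have hgne : gcd P Q ≠ 0 := fun h => by simp [h] at hg
  have hQd : Q / gcd P Q ≠ 0 := right_div_gcd_ne_zero (p := P) hQ
  have hlc : (Q / gcd P Q).leadingCoeff⁻¹ ≠ 0 :=
    inv_ne_zero (Polynomial.leadingCoeff_ne_zero.mpr hQd)
  have hdivdeg : ∀ R : K[X], (R / gcd P Q).natDegree = R.natDegree := by
    intro R
    rcases eq_or_ne R 0 with rfl | hR
    · simp [EuclideanDomain.zero_div]
    · have hdvd : gcd P Q ∣ R := hg.dvd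
      have hmul : R / gcd P Q * gcd P Q = R := by
        rw [mul_comm]; exact EuclideanDomain.mul_div_cancel' hgne hdvd
      have hRd : R / gcd P Q ≠ 0 := fun h => by rw [h, zero_mul] at hmul; exact hR hmul.symm
      conv_rhs => rw [← hmul]
      rw [Polynomial.natDegree_mul hRd hgne, Polynomial.natDegree_eq_zero_of_isUnit hg,
        add_zero]
  rw [ratDeg, RatFunc.num_div, RatFunc.denom_div _ hQ,
    Polynomial.natDegree_C_mul hlc, Polynomial.natDegree_C_mul hlc, hdivdeg, hdivdeg]

theorem aux_isCoprime_phom (h : RatFunc K)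
    {p q : K[X]} (hpq : IsCoprime p q) {N : ℕ} (hpN : p.natDegree ≤ N) (hqN : q.natDegree ≤ N)
    (hcN : p.coeff N ≠ 0 ∨ q.coeff N ≠ 0) :
    IsCoprime (phom p N h.num h.denom) (phom q N h.num h.denom) := by
  classical
  set a := h.num with hadef
  set b := h.denom with hbdef
  have hb : b ≠ 0 := h.denom_ne_zero
  have hab : IsCoprime a b := RatFunc.isCoprime_num_denom h
  obtain ⟨u, v, huv⟩ := hpq
  set P := phom p N a b with hPdef
  set Q := phom q N a b with hQdef
  have hE : phom u u.natDegree a b * P * b ^ v.natDegree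
        + phom v v.natDegree a b * Q * b ^ u.natDegree
        = b ^ (u.natDegree + v.natDegree + N) := by
    apply RatFunc.algebraMap_injective K
    rw [map_add, map_mul, map_mul, map_mul, map_mul, map_pow, map_pow, map_pow,
      ← aux_aeval_mul_denom_pow h u le_rfl, ← aux_aeval_mul_denom_pow h v le_rfl,
      ← aux_aeval_mul_denom_pow h p hpN, ← aux_aeval_mul_denom_pow h q hqN]
    have h1 : Polynomial.aeval h u * Polynomial.aeval h p
        + Polynomial.aeval h v * Polynomial.aeval h q = 1 := by
      rw [← map_mul, ← map_mul, ← map_add, huv, map_one]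
    calc Polynomial.aeval h u * (algebraMap K[X] (RatFunc K)) b ^ u.natDegree *
            (Polynomial.aeval h p * (algebraMap K[X] (RatFunc K)) b ^ N) *
            (algebraMap K[X] (RatFunc K)) b ^ v.natDegree
          + Polynomial.aeval h v * (algebraMap K[X] (RatFunc K)) b ^ v.natDegree *
            (Polynomial.aeval h q * (algebraMap K[X] (RatFunc K)) b ^ N) *
            (algebraMap K[X] (RatFunc K)) b ^ u.natDegree
        = (Polynomial.aeval h u * Polynomial.aeval h p
            + Polynomial.aeval h v * Polynomial.aeval h q) *
            (algebraMap K[X] (RatFunc K)) b ^ (u.natDegree + v.natDegree + N) := by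
          rw [pow_add, pow_add]; ring
      _ = (algebraMap K[X] (RatFunc K)) b ^ (u.natDegree + v.natDegree + N) := by
          rw [h1, one_mul]
  by_contra hnc
  have hgu : ¬ IsUnit (gcd P Q) := fun hu => hnc ((gcd_isUnit_iff P Q).mp hu)
  have hg0 : gcd P Q ≠ 0 := by
    intro h0
    obtain ⟨hP0, hQ0⟩ := (_root_.gcd_eq_zero_iff P Q).mp h0
    rw [hP0, hQ0, mul_zero, zero_mul, mul_zero, zero_mul, add_zero] at hE
    exact pow_ne_zero _ hb hE.symm
  obtain ⟨d, hdirr, hddvd⟩ := WfDvdMonoid.exists_irreducible_factor hgu hg0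
  have hdprime : Prime d := UniqueFactorizationMonoid.irreducible_iff_prime.mp hdirr
  have hdP : d ∣ P := hddvd.trans (gcd_dvd_left _ _)
  have hdQ : d ∣ Q := hddvd.trans (gcd_dvd_right _ _)
  have hdb : d ∣ b := by
    apply hdprime.dvd_of_dvd_pow (n := u.natDegree + v.natDegree + N)
    rw [← hE]
    exact dvd_add ((hdP.mul_left _).mul_right _) ((hdQ.mul_left _).mul_right _)
  have key : ∀ w : K[X], d ∣ phom w N a b → w.coeff N ≠ 0 → False := by
    intro w hdW hw
    have hsplit : phom w N a b = (∑ i ∈ Finset.range N,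
        Polynomial.C (w.coeff i) * a ^ i * b ^ (N - i))
        + Polynomial.C (w.coeff N) * a ^ N * b ^ (N - N) := Finset.sum_range_succ _ N
    have hdsum : d ∣ ∑ i ∈ Finset.range N,
        Polynomial.C (w.coeff i) * a ^ i * b ^ (N - i) := by
      refine Finset.dvd_sum fun i hi => ?_
      have hiN : i < N := Finset.mem_range.mp hi
      exact dvd_mul_of_dvd_right (hdb.trans (dvd_pow_self b (by omega : N - i ≠ 0))) _
    have hsub : d ∣ Polynomial.C (w.coeff N) * a ^ N := by
      have h2 : Polynomial.C (w.coeff N) * a ^ N = phom w N a b - ∑ i ∈ Finset.range N,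
          Polynomial.C (w.coeff i) * a ^ i * b ^ (N - i) := by
        rw [hsplit, Nat.sub_self, pow_zero, mul_one]; ring
      rw [h2]
      exact dvd_sub hdW hdsum
    have hda : d ∣ a := by
      apply hdprime.dvd_of_dvd_pow (n := N)
      have h3 : a ^ N = Polynomial.C (w.coeff N)⁻¹ * (Polynomial.C (w.coeff N) * a ^ N) := by
        rw [← mul_assoc, ← Polynomial.C_mul, inv_mul_cancel₀ hw, Polynomial.C_1, one_mul]
      rw [h3]
      exact hsub.mul_left _
    exact hdirr.not_isUnit (hab.isUnit_of_dvd' hda hdb)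
  rcases hcN with hw | hw
  · exact key p hdP hw
  · exact key q hdQ hw

end Stmt2Aux

open Stmt2Aux Polynomial

/-- Let `K` be a field and `g, h ∈ K(x)` with `h` nonconstant.
Then `deg (g ∘ h) = (deg g) * (deg h)`. -/
theorem stmt_2 {K : Type*} [Field K] (g h : RatFunc K)
    (hh : ∀ c : K, h ≠ RatFunc.C c) :
    ratDeg (ratComp g h) = ratDeg g * ratDeg h := by
  classical
  rcases eq_or_ne g 0 with rfl | hg0
  · simp [ratComp, ratDeg]
  set p := g.num with hpdef
  set q := g.denom with hqdef
  set a := h.num with hadef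
  set b := h.denom with hbdef
  have hp : p ≠ 0 := RatFunc.num_ne_zero hg0
  have hq : q ≠ 0 := g.denom_ne_zero
  have hh0 : h ≠ 0 := by
    intro h0
    exact hh 0 (by rw [h0, map_zero])
  have ha : a ≠ 0 := RatFunc.num_ne_zero hh0
  have hb : b ≠ 0 := h.denom_ne_zero
  have hcop : IsCoprime p q := RatFunc.isCoprime_num_denom g
  set N := max p.natDegree q.natDegree with hNdef
  set M := max a.natDegree b.natDegree with hMdef
  have hpN : p.natDegree ≤ N := le_max_left _ _
  have hqN : q.natDegree ≤ N := le_max_right _ _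
  have hB : (algebraMap K[X] (RatFunc K)) b ≠ 0 := RatFunc.algebraMap_ne_zero hb
  have Ip := aux_aeval_mul_denom_pow h p hpN
  have Iq := aux_aeval_mul_denom_pow h q hqN
  set P := phom p N a b with hPdef
  set Q := phom q N a b with hQdef
  have hQ0 : Q ≠ 0 := by
    intro h0
    rw [h0, map_zero, mul_eq_zero] at Iq
    rcases Iq with h1 | h1
    · exact aux_aeval_ne_zero h hh hq h1
    · exact pow_ne_zero N hB h1
  have hcomp : ratComp g h = algebraMap K[X] (RatFunc K) P / algebraMap K[X] (RatFunc K) Q := by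
    rw [ratComp, ← mul_div_mul_right _ _ (pow_ne_zero N hB), Ip, Iq]
  have hcN : p.coeff N ≠ 0 ∨ q.coeff N ≠ 0 := by
    rcases max_choice p.natDegree q.natDegree with hm | hm
    · left
      rw [← hNdef] at hm
      rw [hm]
      exact Polynomial.leadingCoeff_ne_zero.mpr hp
    · right
      rw [← hNdef] at hm
      rw [hm]
      exact Polynomial.leadingCoeff_ne_zero.mpr hq
  have hPQ : IsCoprime P Q := aux_isCoprime_phom h hcop hpN hqN hcN
  rw [hcomp, aux_ratDeg_div hQ0 hPQ]
  have hle : ∀ w : K[X], (phom w N a b).natDegree ≤ N * M := fun w => phom_natDegree_le w N a b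
  suffices hone : P.natDegree = N * M ∨ Q.natDegree = N * M by
    have hmax : max P.natDegree Q.natDegree = N * M := by
      rcases hone with h1 | h1
      · rw [max_eq_left (by rw [h1]; exact hle q), h1]
      · rw [max_eq_right (by rw [h1]; exact hle p), h1]
    rw [hmax]
    rfl
  rcases lt_trichotomy a.natDegree b.natDegree with hlt | heq | hgt
  · -- deg a < deg b : use reflection
    have hM : M = b.natDegree := max_eq_right (le_of_lt hlt)
    have hc0 : p.coeff 0 ≠ 0 ∨ q.coeff 0 ≠ 0 := by
      by_contra hcon
      push_neg at hcon
      have hdp : (X : K[X]) ∣ p := Polynomial.X_dvd_iff.mpr hcon.1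
      have hdq : (X : K[X]) ∣ q := Polynomial.X_dvd_iff.mpr hcon.2
      exact Polynomial.not_isUnit_X (hcop.isUnit_of_dvd' hdp hdq)
    rcases hc0 with hc | hc
    · left
      rw [hPdef, phom_reflect, phom_natDegree_eq_left hlt
        (fun h0 => hp (Polynomial.reflect_eq_zero_iff.mp h0)) (natDegree_reflect_eq hpN hc), hM]
    · right
      rw [hQdef, phom_reflect, phom_natDegree_eq_left hlt
        (fun h0 => hq (Polynomial.reflect_eq_zero_iff.mp h0)) (natDegree_reflect_eq hqN hc), hM]
  · -- deg a = deg b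
    have hM : M = b.natDegree := by rw [hMdef, heq, max_self]
    have hev : p.eval (a.leadingCoeff / b.leadingCoeff) ≠ 0
        ∨ q.eval (a.leadingCoeff / b.leadingCoeff) ≠ 0 := by
      by_contra hcon
      push_neg at hcon
      have hdp : (X - Polynomial.C (a.leadingCoeff / b.leadingCoeff)) ∣ p :=
        Polynomial.dvd_iff_isRoot.mpr hcon.1
      have hdq : (X - Polynomial.C (a.leadingCoeff / b.leadingCoeff)) ∣ q :=
        Polynomial.dvd_iff_isRoot.mpr hcon.2
      exact Polynomial.not_isUnit_X_sub_C _ (hcop.isUnit_of_dvd' hdp hdq)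
    rcases hev with hc | hc
    · left
      rw [hPdef, phom_natDegree_eq_of_eval ha hb heq p hpN hc, hM]
    · right
      rw [hQdef, phom_natDegree_eq_of_eval ha hb heq q hqN hc, hM]
  · -- deg b < deg a
    have hM : M = a.natDegree := max_eq_left (le_of_lt hgt)
    rcases max_choice p.natDegree q.natDegree with hm | hm
    · left
      rw [hPdef, phom_natDegree_eq_left hgt hp (hNdef ▸ hm.symm), hM]
    · right
      rw [hQdef, phom_natDegree_eq_left hgt hq (hNdef ▸ hm.symm), hM]
end

section
/- Let K be a field and let f = g ∘ h with g, h ∈ K(x), g nonzero and h nonconstant. Then there exist G, H ∈ K(x) such that f = G ∘ H, deg G = deg g, deg H = deg h, and ord_∞ H < 0. -/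
open Polynomial

/-- The order of vanishing at infinity of a rational function `f = f₁/f₂`
(with `f₁, f₂` coprime): `ord_∞ f = deg f₂ − deg f₁ = −intDegree f`. -/
noncomputable def ordInf {K : Type*} [Field K] (f : RatFunc K) : ℤ :=
  -f.intDegree

namespace Stmt6Aux

variable {K : Type*} [Field K]

lemma transcendental_of_nonconst {h : RatFunc K} (hh : ∀ c : K, h ≠ RatFunc.C c) :
    Transcendental K h := by
  intro halg
  have hint : IsIntegral K h := halg.isIntegral
  have hint2 : IsIntegral K[X] h := hint.tower_top
  obtain ⟨p, hp⟩ := IsIntegrallyClosed.isIntegral_iff.mp hint2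
  rw [← hp, isAlgebraic_algebraMap_iff (RatFunc.algebraMap_injective K)] at halg
  have hd : p.natDegree = 0 := by
    by_contra hd
    exact (Polynomial.transcendental p hd
      (mem_nonZeroDivisors_of_ne_zero (leadingCoeff_ne_zero.mpr (fun h0 => hd (by simp [h0]))))) halg
  obtain ⟨c, rfl⟩ := Polynomial.natDegree_eq_zero.mp hd
  exact hh c (by rw [← hp, RatFunc.algebraMap_C])

lemma X_ne_C (d : K) : (RatFunc.X : RatFunc K) ≠ RatFunc.C d := by
  intro hd
  have h1 := RatFunc.intDegree_X (K := K)
  rw [hd, RatFunc.intDegree_C] at h1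
  exact absurd h1 (by norm_num)

noncomputable def phi {h : RatFunc K} (th : Transcendental K h) : RatFunc K →ₐ[K] RatFunc K :=
  IsFractionRing.liftAlgHom (g := Polynomial.aeval h) (transcendental_iff_injective.mp th)

lemma phi_algebraMap {h : RatFunc K} (th : Transcendental K h) (p : K[X]) :
    phi th (algebraMap K[X] (RatFunc K) p) = Polynomial.aeval h p := by
  rw [phi, IsFractionRing.liftAlgHom_apply, IsFractionRing.lift_algebraMap]
  rfl

lemma ratComp_eq_phi {h : RatFunc K} (th : Transcendental K h) (g : RatFunc K) :
    ratComp g h = phi th g := by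
  conv_rhs => rw [← RatFunc.num_div_denom g]
  rw [map_div₀, phi_algebraMap, phi_algebraMap, ratComp]

lemma phi_comp {w H : RatFunc K} (tw : Transcendental K w) (tH : Transcendental K H)
    (t2 : Transcendental K (phi tH w)) (g : RatFunc K) :
    phi tH (phi tw g) = phi t2 g := by
  have key : (phi tH).toRingHom.comp (phi tw).toRingHom = (phi t2).toRingHom := by
    apply IsLocalization.ringHom_ext (nonZeroDivisors K[X])
    refine RingHom.ext fun p => ?_
    simp only [RingHom.comp_apply, AlgHom.toRingHom_eq_coe, RingHom.coe_coe]
    rw [phi_algebraMap tw, phi_algebraMap t2, ← Polynomial.aeval_algHom_apply]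
  exact congrArg (fun (F : RatFunc K →+* RatFunc K) => F g) key

lemma phi_X {h : RatFunc K} (th : Transcendental K h) : phi th RatFunc.X = h := by
  rw [← RatFunc.algebraMap_X, phi_algebraMap, Polynomial.aeval_X]

lemma phi_C {h : RatFunc K} (th : Transcendental K h) (c : K) :
    phi th (RatFunc.C c) = RatFunc.C c := by
  rw [← RatFunc.algebraMap_C, phi_algebraMap, Polynomial.aeval_C,
    IsScalarTower.algebraMap_apply K K[X] (RatFunc K), Polynomial.algebraMap_eq,
    RatFunc.algebraMap_C]

lemma ratComp_X_right (g : RatFunc K) : ratComp g RatFunc.X = g := by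
  have key : ∀ p : K[X], Polynomial.aeval (RatFunc.X : RatFunc K) p
      = algebraMap K[X] (RatFunc K) p := fun p => by
    rw [← RatFunc.algebraMap_X, Polynomial.aeval_algebraMap_apply,
      Polynomial.aeval_X_left_apply]
  rw [ratComp, key, key, RatFunc.num_div_denom]

lemma homog (b : RatFunc K) (N : ℕ) (p : K[X]) (hpN : p.natDegree ≤ N) :
    Polynomial.aeval b p = algebraMap K[X] (RatFunc K)
      (∑ i ∈ Finset.range (N+1), Polynomial.C (p.coeff i) * b.num^i * b.denom^(N-i))
      / (algebraMap K[X] (RatFunc K) b.denom)^N := by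
  have hT : (algebraMap K[X] (RatFunc K) b.denom) ≠ 0 :=
    RatFunc.algebraMap_ne_zero b.denom_ne_zero
  rw [eq_div_iff (pow_ne_zero _ hT)]
  rw [Polynomial.aeval_eq_sum_range' (Nat.lt_succ_of_le hpN), Finset.sum_mul, map_sum]
  refine Finset.sum_congr rfl fun i hi => ?_
  have hiN : i ≤ N := Nat.lt_succ_iff.mp (Finset.mem_range.mp hi)
  have hb : b ^ i = (algebraMap K[X] (RatFunc K) b.num)^i
      / (algebraMap K[X] (RatFunc K) b.denom)^i := by
    conv_lhs => rw [← RatFunc.num_div_denom b]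
    rw [div_pow]
  have key : (algebraMap K[X] (RatFunc K) b.num)^i / (algebraMap K[X] (RatFunc K) b.denom)^i
      * (algebraMap K[X] (RatFunc K) b.denom)^N
      = (algebraMap K[X] (RatFunc K) b.num)^i * (algebraMap K[X] (RatFunc K) b.denom)^(N-i) := by
    rw [div_mul_eq_mul_div, div_eq_iff (pow_ne_zero _ hT), mul_assoc, ← pow_add]
    congr 2
    omega
  rw [map_mul, map_mul, map_pow, map_pow, RatFunc.smul_eq_C_mul, ← RatFunc.algebraMap_C,
    hb, mul_assoc, key, ← mul_assoc]

lemma natDegree_homog_le (b : RatFunc K) (N : ℕ) (p : K[X]) :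
    (∑ i ∈ Finset.range (N+1), Polynomial.C (p.coeff i) * b.num^i * b.denom^(N-i)).natDegree
      ≤ N * ratDeg b := by
  refine Polynomial.natDegree_sum_le_of_forall_le _ _ fun i hi => ?_
  have hiN : i ≤ N := Nat.lt_succ_iff.mp (Finset.mem_range.mp hi)
  calc (Polynomial.C (p.coeff i) * b.num^i * b.denom^(N-i)).natDegree
      ≤ (Polynomial.C (p.coeff i) * b.num^i).natDegree + (b.denom^(N-i)).natDegree :=
        Polynomial.natDegree_mul_le
    _ ≤ ((Polynomial.C (p.coeff i)).natDegree + (b.num^i).natDegree)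
        + (b.denom^(N-i)).natDegree := by gcongr; exact Polynomial.natDegree_mul_le
    _ ≤ (0 + i * b.num.natDegree) + (N-i) * b.denom.natDegree := by
        gcongr
        · exact le_of_eq (Polynomial.natDegree_C _)
        · exact Polynomial.natDegree_pow_le
        · exact Polynomial.natDegree_pow_le
    _ ≤ i * ratDeg b + (N-i) * ratDeg b := by
        rw [zero_add]
        gcongr
        · exact le_max_left _ _
        · exact le_max_right _ _
    _ = N * ratDeg b := by rw [← add_mul]; congr 1; omega

lemma ratComp_eq_algebraMap_div (a b : RatFunc K) :
    ratComp a b =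
      algebraMap K[X] (RatFunc K)
        (∑ i ∈ Finset.range (ratDeg a + 1),
          Polynomial.C (a.num.coeff i) * b.num^i * b.denom^(ratDeg a - i))
      / algebraMap K[X] (RatFunc K)
        (∑ i ∈ Finset.range (ratDeg a + 1),
          Polynomial.C (a.denom.coeff i) * b.num^i * b.denom^(ratDeg a - i)) := by
  rw [ratComp, homog b (ratDeg a) a.num (le_max_left _ _),
    homog b (ratDeg a) a.denom (le_max_right _ _),
    div_div_div_cancel_right₀ (pow_ne_zero _ (RatFunc.algebraMap_ne_zero b.denom_ne_zero))]

lemma aeval_denom_ne_zero (a b : RatFunc K) (tb : Transcendental K b) :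
    Polynomial.aeval b a.denom ≠ 0 := by
  intro h0
  exact a.denom_ne_zero (transcendental_iff_injective.mp tb (by simpa using h0))

lemma ratDeg_comp_le (a b : RatFunc K) (tb : Transcendental K b) :
    ratDeg (ratComp a b) ≤ ratDeg a * ratDeg b := by
  set N := ratDeg a with hN
  set A := ∑ i ∈ Finset.range (N+1), Polynomial.C (a.num.coeff i) * b.num^i * b.denom^(N-i)
    with hA
  set B := ∑ i ∈ Finset.range (N+1), Polynomial.C (a.denom.coeff i) * b.num^i * b.denom^(N-i)
    with hB
  have hcomp : ratComp a b = algebraMap K[X] (RatFunc K) A / algebraMap K[X] (RatFunc K) B :=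
    ratComp_eq_algebraMap_div a b
  have hBne : B ≠ 0 := by
    intro h0
    apply aeval_denom_ne_zero a b tb
    rw [homog b N a.denom (le_max_right _ _), ← hB, h0, map_zero, zero_div]
  have hAd : A.natDegree ≤ N * ratDeg b := natDegree_homog_le b N a.num
  have hBd : B.natDegree ≤ N * ratDeg b := natDegree_homog_le b N a.denom
  have h1 : (ratComp a b).num.natDegree ≤ N * ratDeg b := by
    by_cases hA0 : A = 0
    · rw [hcomp, hA0, map_zero, zero_div]
      simp
    · exact le_trans (Polynomial.natDegree_le_of_dvd
        (by rw [hcomp]; exact RatFunc.num_div_dvd A hBne) hA0) hAd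
  have h2 : (ratComp a b).denom.natDegree ≤ N * ratDeg b := by
    refine le_trans (Polynomial.natDegree_le_of_dvd ?_ hBne) hBd
    rw [hcomp]
    exact RatFunc.denom_div_dvd A B
  exact max_le h1 h2

lemma num_denom_natDegree_of_coprime {p q : K[X]} (hp : p ≠ 0) (hq : q ≠ 0)
    (hcop : IsCoprime p q) :
    (algebraMap K[X] (RatFunc K) p / algebraMap K[X] (RatFunc K) q).num.natDegree = p.natDegree ∧
    (algebraMap K[X] (RatFunc K) p / algebraMap K[X] (RatFunc K) q).denom.natDegree
      = q.natDegree := by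
  set x := algebraMap K[X] (RatFunc K) p / algebraMap K[X] (RatFunc K) q with hx
  have hxne : x ≠ 0 := by
    rw [hx]
    exact div_ne_zero (RatFunc.algebraMap_ne_zero hp) (RatFunc.algebraMap_ne_zero hq)
  have cross : x.num * q = p * x.denom := by
    apply RatFunc.algebraMap_injective K
    rw [map_mul, map_mul]
    have h1 : x * algebraMap K[X] (RatFunc K) x.denom = algebraMap K[X] (RatFunc K) x.num := by
      nth_rewrite 1 [← RatFunc.num_div_denom x]
      exact div_mul_cancel₀ _ (RatFunc.algebraMap_ne_zero x.denom_ne_zero)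
    have h2 : x * algebraMap K[X] (RatFunc K) q = algebraMap K[X] (RatFunc K) p := by
      rw [hx, div_mul_cancel₀ _ (RatFunc.algebraMap_ne_zero hq)]
    rw [← h1, ← h2]
    ring
  have d1 : p ∣ x.num := hcop.dvd_of_dvd_mul_right ⟨x.denom, cross⟩
  have d2 : x.num ∣ p := RatFunc.num_div_dvd p hq
  have d3 : q ∣ x.denom := hcop.symm.dvd_of_dvd_mul_left ⟨x.num, by rw [← cross]; ring⟩
  have d4 : x.denom ∣ q := RatFunc.denom_div_dvd p q
  constructor
  · exact le_antisymm (Polynomial.natDegree_le_of_dvd d2 hp)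
      (Polynomial.natDegree_le_of_dvd d1 (RatFunc.num_ne_zero hxne))
  · exact le_antisymm (Polynomial.natDegree_le_of_dvd d4 hq)
      (Polynomial.natDegree_le_of_dvd d3 x.denom_ne_zero)

end Stmt6Aux

open Stmt6Aux

/-- Let `K` be a field and `f = g ∘ h` with `g, h ∈ K(x)`, `g` nonzero
and `h` nonconstant.  Then there exist `G, H ∈ K(x)` such that `f = G ∘ H`,
`deg G = deg g`, `deg H = deg h`, and `ord_∞ H < 0`. -/
theorem stmt_6 {K : Type*} [Field K] (f g h : RatFunc K) (hg : g ≠ 0)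
    (hh : ∀ c : K, h ≠ RatFunc.C c) (hf : f = ratComp g h) :
    ∃ G H : RatFunc K, f = ratComp G H ∧ ratDeg G = ratDeg g ∧ ratDeg H = ratDeg h ∧
      ordInf H < 0 := by
  have th : Transcendental K h := transcendental_of_nonconst hh
  by_cases hpos : 0 < h.intDegree
  · exact ⟨g, h, hf, rfl, rfl, by rw [ordInf]; omega⟩
  push_neg at hpos
  have hne : h ≠ 0 := fun h0 => hh 0 (by rw [h0, map_zero])
  have hnum : h.num ≠ 0 := RatFunc.num_ne_zero hne
  have hdenne : h.denom ≠ 0 := h.denom_ne_zero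
  have hile : (h.num.natDegree : ℤ) ≤ h.denom.natDegree := by
    rw [RatFunc.intDegree] at hpos; omega
  -- choose the constant c
  obtain ⟨c, hrne, hrdeg⟩ : ∃ c : K, h.num - Polynomial.C c * h.denom ≠ 0 ∧
      (h.num - Polynomial.C c * h.denom).natDegree < h.denom.natDegree := by
    rcases lt_or_eq_of_le hpos with hlt | h0
    · refine ⟨0, by simpa using hnum, ?_⟩
      rw [RatFunc.intDegree] at hlt
      simp only [map_zero, zero_mul, sub_zero]
      omega
    · set c := h.num.leadingCoeff * h.denom.leadingCoeff⁻¹ with hc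
      have hcne : c ≠ 0 := mul_ne_zero (Polynomial.leadingCoeff_ne_zero.mpr hnum)
        (inv_ne_zero (Polynomial.leadingCoeff_ne_zero.mpr hdenne))
      have hdeq : h.num.natDegree = h.denom.natDegree := by
        rw [RatFunc.intDegree] at h0; omega
      have hdd : h.num.degree = (Polynomial.C c * h.denom).degree := by
        rw [Polynomial.degree_mul, Polynomial.degree_C hcne, zero_add,
          Polynomial.degree_eq_natDegree hnum, Polynomial.degree_eq_natDegree hdenne]
        exact_mod_cast hdeq
      have hlc : h.num.leadingCoeff = (Polynomial.C c * h.denom).leadingCoeff := by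
        rw [Polynomial.leadingCoeff_mul, Polynomial.leadingCoeff_C, hc, mul_assoc,
          inv_mul_cancel₀ (Polynomial.leadingCoeff_ne_zero.mpr hdenne), mul_one]
      have hr0 : h.num - Polynomial.C c * h.denom ≠ 0 := by
        intro hr
        apply hh c
        have hnc : h.num = Polynomial.C c * h.denom := sub_eq_zero.mp hr
        rw [← RatFunc.num_div_denom h, hnc, map_mul, mul_div_assoc,
          div_self (RatFunc.algebraMap_ne_zero hdenne), mul_one, RatFunc.algebraMap_C]
      refine ⟨c, hr0, ?_⟩
      have := Polynomial.natDegree_lt_natDegree hr0 (Polynomial.degree_sub_lt hdd hnum hlc)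
      omega
  set r := h.num - Polynomial.C c * h.denom with hr
  have hcop : IsCoprime r h.denom := by
    have h1 := (RatFunc.isCoprime_num_denom h).add_mul_right_left (-Polynomial.C c)
    simpa [hr, sub_eq_add_neg, neg_mul, mul_comm] using h1
  set H := algebraMap K[X] (RatFunc K) h.denom / algebraMap K[X] (RatFunc K) r with hH
  have hHne : H ≠ 0 :=
    div_ne_zero (RatFunc.algebraMap_ne_zero hdenne) (RatFunc.algebraMap_ne_zero hrne)
  obtain ⟨eH1, eH2⟩ := num_denom_natDegree_of_coprime hdenne hrne hcop.symm
  have hordH : ordInf H < 0 := by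
    rw [ordInf, RatFunc.intDegree, ← hH] at *
    rw [eH1, eH2]
    omega
  have hdegH : ratDeg H = ratDeg h := by
    rw [ratDeg, ratDeg, eH1, eH2]
    omega
  have hsub : algebraMap K[X] (RatFunc K) r / algebraMap K[X] (RatFunc K) h.denom
      = h - RatFunc.C c := by
    rw [hr, map_sub, map_mul, sub_div, RatFunc.num_div_denom, RatFunc.algebraMap_C,
      mul_div_assoc, div_self (RatFunc.algebraMap_ne_zero hdenne), mul_one]
  have hHinv : H⁻¹ = h - RatFunc.C c := by rw [hH, inv_div, hsub]
  have tH : Transcendental K H := by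
    apply transcendental_of_nonconst
    intro e he
    have he0 : e ≠ 0 := by
      intro e0
      rw [e0, map_zero] at he
      exact hHne he
    apply hh (e⁻¹ + c)
    have hexp : h = H⁻¹ + RatFunc.C c := by rw [hHinv]; ring
    rw [hexp, he, ← map_inv₀, ← map_add]
  set w : RatFunc K := (RatFunc.X : RatFunc K)⁻¹ + RatFunc.C c with hwdef
  have tw : Transcendental K w := by
    apply transcendental_of_nonconst
    intro e he
    have h1 : (RatFunc.X : RatFunc K)⁻¹ = RatFunc.C (e - c) := by
      rw [map_sub]
      exact eq_sub_of_add_eq he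
    have h2 : e - c ≠ 0 := by
      intro h0
      rw [h0, map_zero, inv_eq_zero] at h1
      exact RatFunc.X_ne_zero h1
    exact X_ne_C (e - c)⁻¹ (by rw [← inv_inv (RatFunc.X : RatFunc K), h1, map_inv₀])
  have hphiw : phi tH w = h := by
    rw [hwdef, map_add, map_inv₀, phi_X, phi_C, hHinv]
    ring
  -- the new outer function
  set G := ratComp g w with hG
  have t2 : Transcendental K (phi tH w) := by rw [hphiw]; exact th
  have hfGH : ratComp G H = ratComp g h := by
    rw [hG, ratComp_eq_phi tH, ratComp_eq_phi tw g, phi_comp tw tH t2, ← ratComp_eq_phi t2]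
    exact congrArg (ratComp g) hphiw
  -- the inverse Möbius function
  set w' : RatFunc K := (algebraMap K[X] (RatFunc K) (Polynomial.X - Polynomial.C c))⁻¹
    with hw'def
  have hXC_ne : (Polynomial.X - Polynomial.C c : K[X]) ≠ 0 := Polynomial.X_sub_C_ne_zero c
  have tw' : Transcendental K w' := by
    apply transcendental_of_nonconst
    intro e he
    have hw'ne : w' ≠ 0 := inv_ne_zero (RatFunc.algebraMap_ne_zero hXC_ne)
    have he0 : e ≠ 0 := by
      intro e0
      rw [e0, map_zero] at he
      exact hw'ne he
    have h1 : algebraMap K[X] (RatFunc K) (Polynomial.X - Polynomial.C c)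
        = algebraMap K[X] (RatFunc K) (Polynomial.C e⁻¹) := by
      rw [← inv_inv (algebraMap K[X] (RatFunc K) (Polynomial.X - Polynomial.C c)), ← hw'def,
        he, ← map_inv₀, RatFunc.algebraMap_C]
    have h2 := RatFunc.algebraMap_injective K h1
    have h3 := congrArg Polynomial.natDegree h2
    rw [Polynomial.natDegree_X_sub_C, Polynomial.natDegree_C] at h3
    exact one_ne_zero h3
  have hphiw' : phi tw' w = RatFunc.X := by
    rw [hwdef, map_add, map_inv₀, phi_X, phi_C, hw'def, inv_inv, map_sub,
      RatFunc.algebraMap_X, RatFunc.algebraMap_C]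
    ring
  have t3 : Transcendental K (phi tw' w) := by
    rw [hphiw']
    exact transcendental_of_nonconst X_ne_C
  have hgG : ratComp G w' = g := by
    rw [hG, ratComp_eq_phi tw', ratComp_eq_phi tw g, phi_comp tw tw' t3, ← ratComp_eq_phi t3,
      hphiw', ratComp_X_right]
  -- degrees of the Möbius functions
  have hdw : ratDeg w ≤ 1 := by
    have hw_eq : w = algebraMap K[X] (RatFunc K) (Polynomial.C c * Polynomial.X + 1)
        / algebraMap K[X] (RatFunc K) Polynomial.X := by
      rw [map_add, map_mul, map_one, RatFunc.algebraMap_C, RatFunc.algebraMap_X, add_div,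
        mul_div_assoc, div_self RatFunc.X_ne_zero, mul_one, one_div, hwdef, add_comm]
    have hwnum_ne : (Polynomial.C c * Polynomial.X + 1 : K[X]) ≠ 0 := by
      intro h0
      have := congrArg (fun p => Polynomial.coeff p 0) h0
      simp at this
    have hwcop : IsCoprime (Polynomial.C c * Polynomial.X + 1) (Polynomial.X : K[X]) := by
      have h1 := (isCoprime_one_left (x := (Polynomial.X : K[X]))).add_mul_right_left
        (Polynomial.C c)
      rwa [add_comm] at h1
    obtain ⟨e1, e2⟩ := num_denom_natDegree_of_coprime hwnum_ne Polynomial.X_ne_zero hwcop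
    rw [← hw_eq] at e1 e2
    rw [ratDeg, e1, e2, Polynomial.natDegree_X]
    refine max_le ?_ le_rfl
    refine le_trans (Polynomial.natDegree_add_le _ _) (max_le ?_ (by simp))
    exact le_trans (Polynomial.natDegree_C_mul_le _ _) (le_of_eq Polynomial.natDegree_X)
  have hdw' : ratDeg w' ≤ 1 := by
    have hw'eq : w' = algebraMap K[X] (RatFunc K) 1
        / algebraMap K[X] (RatFunc K) (Polynomial.X - Polynomial.C c) := by
      rw [map_one, hw'def, inv_eq_one_div]
    obtain ⟨e1, e2⟩ := num_denom_natDegree_of_coprime (one_ne_zero (α := K[X])) hXC_ne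
      isCoprime_one_left
    rw [← hw'eq] at e1 e2
    rw [ratDeg, e1, e2, Polynomial.natDegree_one, Polynomial.natDegree_X_sub_C]
    simp
  have d1 : ratDeg G ≤ ratDeg g := by
    refine le_trans (ratDeg_comp_le g w tw) ?_
    calc ratDeg g * ratDeg w ≤ ratDeg g * 1 := Nat.mul_le_mul_left _ hdw
      _ = ratDeg g := mul_one _
  have d2 : ratDeg g ≤ ratDeg G := by
    conv_lhs => rw [← hgG]
    refine le_trans (ratDeg_comp_le G w' tw') ?_
    calc ratDeg G * ratDeg w' ≤ ratDeg G * 1 := Nat.mul_le_mul_left _ hdw'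
      _ = ratDeg G := mul_one _
  exact ⟨G, H, by rw [hf, ← hfGH], le_antisymm d1 d2, hdegH, hordH⟩
end

section
/- Let K be a field with algebraic closure K̄ and let f ∈ K(x) be a nonzero rational function with deg f ≥ 2; let d be the greatest proper divisor of deg f. Suppose ord_∞ f ≠ 0 and there exists a prime number p with p > d such that p divides ord_∞ f. Then f is prime over K̄: writing f̄ for the image of f in K̄(x) under the inclusion K(x) → K̄(x), there do not exist g, h ∈ K̄(x) with deg g ≥ 2, deg h ≥ 2, and f̄ = g ∘ h. -/
/-- The image of `f = f₁/f₂ ∈ K(x)` in `K̄(x)` under the inclusion `K(x) → K̄(x)`: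
the rational function `f₁(x) / f₂(x)` with coefficients mapped into `K̄`. -/
noncomputable def ratMap {K Kbar : Type*} [Field K] [Field Kbar] [Algebra K Kbar]
    (f : RatFunc K) : RatFunc Kbar :=
  algebraMap (Polynomial Kbar) (RatFunc Kbar) (f.num.map (algebraMap K Kbar)) /
    algebraMap (Polynomial Kbar) (RatFunc Kbar) (f.denom.map (algebraMap K Kbar))

open Polynomial

namespace Stmt8Aux
variable {L : Type*} [Field L] [DecidableEq L]

lemma ratDeg_zero_lt {h : RatFunc L} (hh2 : 2 ≤ ratDeg h) : h ≠ 0 := by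
  intro h0
  rw [h0] at hh2
  simp [ratDeg] at hh2

lemma lin_ne {h : RatFunc L} (hh2 : 2 ≤ ratDeg h) (r : L) : h.num - C r * h.denom ≠ 0 := by
  intro H
  have he : h.num = C r * h.denom := by linear_combination H
  have hunit : IsUnit h.denom :=
    (RatFunc.isCoprime_num_denom h).isUnit_of_dvd' ⟨C r, by rw [he]; ring⟩ dvd_rfl
  have h1 : h.denom.natDegree = 0 := natDegree_eq_zero_of_isUnit hunit
  have h2 : h.num.natDegree = 0 := by
    rw [he]
    exact le_antisymm (le_trans (natDegree_C_mul_le _ _) h1.le) (Nat.zero_le _)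
  rw [ratDeg, h1, h2] at hh2
  omega

lemma exists_data {h : RatFunc L} (hh2 : 2 ≤ ratDeg h) :
    ∃ (rs : L) (e u : ℕ), e ≤ ratDeg h ∧ u ≤ ratDeg h ∧ (u = 0 ∨ e = 0) ∧
      ((h.denom.natDegree : ℤ) = (ratDeg h : ℤ) - u) ∧
      ∀ r : L, ((h.num - C r * h.denom).natDegree : ℤ)
        = (ratDeg h : ℤ) - (if r = rs then (e : ℤ) else 0) := by
  have hh0 : h ≠ 0 := ratDeg_zero_lt hh2
  have hnum0 : h.num ≠ 0 := RatFunc.num_ne_zero hh0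
  have hden0 : h.denom ≠ 0 := h.denom_ne_zero
  set n := ratDeg h with hn
  have hmax : max h.num.natDegree h.denom.natDegree = n := rfl
  have hlinle : ∀ r : L, (h.num - C r * h.denom).natDegree ≤ n := fun r =>
    le_trans (natDegree_sub_le _ _)
      (max_le (le_trans (le_max_left _ h.denom.natDegree) hmax.le)
        (le_trans (le_trans (natDegree_C_mul_le _ _) (le_max_right h.num.natDegree _)) hmax.le))
  set rs : L := h.num.coeff n / h.denom.coeff n with hrs
  by_cases hd : h.denom.natDegree = n
  · refine ⟨rs, n - (h.num - C rs * h.denom).natDegree, 0, by omega, by omega, Or.inl rfl,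
      by rw [hd]; push_cast; ring, ?_⟩
    intro r
    have hden_cn : h.denom.coeff n ≠ 0 := by
      rw [← hd]; exact leadingCoeff_ne_zero.mpr hden0
    by_cases hr : r = rs
    · subst hr
      rw [if_pos rfl]
      have := hlinle rs
      push_cast [Nat.cast_sub this]
      ring
    · rw [if_neg hr]
      have hcn : (h.num - C r * h.denom).coeff n ≠ 0 := by
        rw [coeff_sub, coeff_C_mul]
        intro H
        apply hr
        rw [hrs]
        field_simp
        linear_combination -H
      have : (h.num - C r * h.denom).natDegree = n :=
        le_antisymm (hlinle r) (le_natDegree_of_ne_zero hcn)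
      rw [this]; ring
  · have hd2lt : h.denom.natDegree < n := by
      have : h.denom.natDegree ≤ n := le_trans (le_max_right h.num.natDegree _) hmax.le
      omega
    have hd1 : h.num.natDegree = n := by omega
    have hnum_cn : h.num.coeff n ≠ 0 := by
      rw [← hd1]; exact leadingCoeff_ne_zero.mpr hnum0
    have hden_cn : h.denom.coeff n = 0 := coeff_eq_zero_of_natDegree_lt hd2lt
    refine ⟨rs, 0, n - h.denom.natDegree, by omega, by omega, Or.inr rfl, by push_cast; omega, ?_⟩
    intro r
    simp only [Nat.cast_zero, ite_self]
    have hcn : (h.num - C r * h.denom).coeff n ≠ 0 := by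
      rw [coeff_sub, coeff_C_mul, hden_cn, mul_zero, sub_zero]
      exact hnum_cn
    have : (h.num - C r * h.denom).natDegree = n :=
      le_antisymm (hlinle r) (le_natDegree_of_ne_zero hcn)
    rw [this]; ring

lemma num_denom_of_div {p q : L[X]} (hp : p ≠ 0) (hq : q ≠ 0) (hcop : IsCoprime p q) :
    (algebraMap L[X] (RatFunc L) p / algebraMap L[X] (RatFunc L) q).num.natDegree = p.natDegree ∧
    (algebraMap L[X] (RatFunc L) p / algebraMap L[X] (RatFunc L) q).denom.natDegree
      = q.natDegree := by
  set x := algebraMap L[X] (RatFunc L) p / algebraMap L[X] (RatFunc L) q with hxdef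
  have hqq : algebraMap L[X] (RatFunc L) q ≠ 0 := by simpa using RatFunc.algebraMap_ne_zero hq
  have hpp : algebraMap L[X] (RatFunc L) p ≠ 0 := by simpa using RatFunc.algebraMap_ne_zero hp
  have hx0 : x ≠ 0 := div_ne_zero hpp hqq
  have hnum0 : x.num ≠ 0 := RatFunc.num_ne_zero hx0
  have hden0 : x.denom ≠ 0 := x.denom_ne_zero
  have hdenhat : algebraMap L[X] (RatFunc L) x.denom ≠ 0 := by
    simpa using RatFunc.algebraMap_ne_zero hden0
  have hcross : p * x.denom = x.num * q := by
    apply RatFunc.algebraMap_injective L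
    have h1 : algebraMap L[X] (RatFunc L) p / algebraMap L[X] (RatFunc L) q =
        algebraMap L[X] (RatFunc L) x.num / algebraMap L[X] (RatFunc L) x.denom := by
      rw [RatFunc.num_div_denom]
    rw [div_eq_div_iff hqq hdenhat] at h1
    rw [map_mul, map_mul]; exact h1
  have hd1 : p ∣ x.num := hcop.dvd_of_dvd_mul_right ⟨x.denom, hcross.symm⟩
  have hd2 : q ∣ x.denom := hcop.symm.dvd_of_dvd_mul_left ⟨x.num, by linear_combination hcross⟩
  have hd3 : x.num ∣ p := RatFunc.num_div_dvd p hq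
  have hd4 : x.denom ∣ q := RatFunc.denom_div_dvd p q
  exact ⟨le_antisymm (natDegree_le_of_dvd hd3 hp) (natDegree_le_of_dvd hd1 hnum0),
    le_antisymm (natDegree_le_of_dvd hd4 hq) (natDegree_le_of_dvd hd2 hden0)⟩


lemma sum_ite_count {α : Type*} [DecidableEq α] (s : Multiset α) (a : α) (c : ℤ) :
    (s.map fun r => if r = a then c else 0).sum = (s.count a : ℤ) * c := by
  induction s using Multiset.induction with
  | empty => simp
  | cons x t ih =>
    simp only [Multiset.map_cons, Multiset.sum_cons, ih, Multiset.count_cons]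
    by_cases hx : x = a
    · subst hx; simp; ring
    · simp [hx, Ne.symm hx]

lemma comp_poly [IsAlgClosed L] {h : RatFunc L} (hh2 : 2 ≤ ratDeg h) (rs : L) (e u : ℕ)
    (hden : (h.denom.natDegree : ℤ) = (ratDeg h : ℤ) - u)
    (hlin : ∀ r : L, ((h.num - C r * h.denom).natDegree : ℤ)
      = (ratDeg h : ℤ) - (if r = rs then (e : ℤ) else 0))
    (m : ℕ) (P : L[X]) (hP0 : P ≠ 0) (hPm : P.natDegree ≤ m) :
    C P.leadingCoeff * (h.denom ^ (m - P.natDegree) *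
        (P.roots.map fun r => h.num - C r * h.denom).prod) ≠ 0 ∧
    (((C P.leadingCoeff * (h.denom ^ (m - P.natDegree) *
        (P.roots.map fun r => h.num - C r * h.denom).prod)).natDegree : ℤ)
      = m * ratDeg h - (((m : ℤ) - P.natDegree) * u + (P.roots.count rs) * e)) ∧
    algebraMap L[X] (RatFunc L) (C P.leadingCoeff * (h.denom ^ (m - P.natDegree) *
        (P.roots.map fun r => h.num - C r * h.denom).prod))
      = aeval h P * (algebraMap L[X] (RatFunc L) h.denom) ^ m := by
  have hh0 : h ≠ 0 := ratDeg_zero_lt hh2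
  have hnum0 : h.num ≠ 0 := RatFunc.num_ne_zero hh0
  have hden0 : h.denom ≠ 0 := h.denom_ne_zero
  have hdenhat : algebraMap L[X] (RatFunc L) h.denom ≠ 0 := by
    simpa using RatFunc.algebraMap_ne_zero hden0
  have hlc : P.leadingCoeff ≠ 0 := leadingCoeff_ne_zero.mpr hP0
  have hC0 : (C P.leadingCoeff : L[X]) ≠ 0 := by simpa using hlc
  have hcard : P.roots.card = P.natDegree := splits_iff_card_roots.mp (IsAlgClosed.splits P)
  have hmem0 : (0 : L[X]) ∉ P.roots.map fun r => h.num - C r * h.denom := by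
    intro H
    obtain ⟨r, _, hr⟩ := Multiset.mem_map.mp H
    exact lin_ne hh2 r hr
  have hprod0 : (P.roots.map fun r => h.num - C r * h.denom).prod ≠ 0 :=
    Multiset.prod_ne_zero hmem0
  have hpow0 : h.denom ^ (m - P.natDegree) ≠ 0 := pow_ne_zero _ hden0
  refine ⟨mul_ne_zero hC0 (mul_ne_zero hpow0 hprod0), ?_, ?_⟩
  · -- degree computation
    have hsum : (((P.roots.map fun r => h.num - C r * h.denom).map natDegree).sum : ℤ)
        = (P.natDegree : ℤ) * ratDeg h - (P.roots.count rs : ℤ) * e := by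
      rw [Nat.cast_multiset_sum, Multiset.map_map, Multiset.map_map]
      simp only [Function.comp]
      have : P.roots.map (fun r => ((h.num - C r * h.denom).natDegree : ℤ))
          = P.roots.map (fun r => (ratDeg h : ℤ) - (if r = rs then (e : ℤ) else 0)) :=
        Multiset.map_congr rfl fun r _ => hlin r
      rw [this, Multiset.sum_map_sub, sum_ite_count, Multiset.map_const', Multiset.sum_replicate,
        hcard, nsmul_eq_mul]
    rw [natDegree_mul hC0 (mul_ne_zero hpow0 hprod0), natDegree_mul hpow0 hprod0, natDegree_C,
      natDegree_pow, natDegree_multiset_prod _ hmem0]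
    push_cast [hsum]
    rw [Nat.cast_sub hPm]
    push_cast
    linear_combination ((m : ℤ) - P.natDegree) * hden
  · -- algebraMap identity
    have hnd : h * algebraMap L[X] (RatFunc L) h.denom = algebraMap L[X] (RatFunc L) h.num := by
      have h' := RatFunc.num_div_denom h
      rw [div_eq_iff hdenhat] at h'
      linear_combination -h'
    have hfac : ∀ r : L, algebraMap L[X] (RatFunc L) (h.num - C r * h.denom)
        = (h - RatFunc.C r) * algebraMap L[X] (RatFunc L) h.denom := by
      intro r
      rw [map_sub, map_mul, RatFunc.algebraMap_C]
      linear_combination -hnd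
    have hprodfac : ((P.roots.map fun r => h.num - C r * h.denom).map
          (algebraMap L[X] (RatFunc L))).prod
        = (P.roots.map fun r => h - RatFunc.C r).prod
          * (algebraMap L[X] (RatFunc L) h.denom) ^ P.natDegree := by
      rw [Multiset.map_map]
      have : P.roots.map (algebraMap L[X] (RatFunc L) ∘ fun r => h.num - C r * h.denom)
          = P.roots.map (fun r => (h - RatFunc.C r) * algebraMap L[X] (RatFunc L) h.denom) :=
        Multiset.map_congr rfl fun r _ => hfac r
      rw [this, Multiset.prod_map_mul, Multiset.map_const', Multiset.prod_replicate, hcard]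
    have haeval : aeval h P
        = RatFunc.C P.leadingCoeff * (P.roots.map fun r => h - RatFunc.C r).prod := by
      conv_lhs => rw [← C_leadingCoeff_mul_prod_multiset_X_sub_C hcard]
      rw [map_mul, aeval_C, RatFunc.algebraMap_eq_C, map_multiset_prod, Multiset.map_map]
      have hmc : P.roots.map (⇑(aeval h) ∘ fun a => X - C a)
          = P.roots.map (fun r => h - RatFunc.C r) :=
        Multiset.map_congr rfl (by intro r _; simp [RatFunc.algebraMap_eq_C])
      rw [hmc]
    have hpow : (algebraMap L[X] (RatFunc L) h.denom) ^ (m - P.natDegree)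
        * (algebraMap L[X] (RatFunc L) h.denom) ^ P.natDegree
        = (algebraMap L[X] (RatFunc L) h.denom) ^ m := pow_sub_mul_pow _ hPm
    rw [map_mul, map_mul, map_pow, RatFunc.algebraMap_C, map_multiset_prod, hprodfac, haeval]
    linear_combination RatFunc.C P.leadingCoeff
      * (P.roots.map fun r => h - RatFunc.C r).prod * hpow

lemma not_both_roots {p q : L[X]} (hcop : IsCoprime p q) (t : L) (hp : eval t p = 0)
    (hq : eval t q = 0) : False := by
  obtain ⟨a, b, hab⟩ := hcop
  have := congrArg (eval t) hab
  simp [hp, hq] at this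

lemma coprime_comp [IsAlgClosed L] {g h : RatFunc L} (hg2 : 2 ≤ ratDeg g)
    (hh2 : 2 ≤ ratDeg h) :
    IsCoprime
      (C g.num.leadingCoeff * (h.denom ^ (ratDeg g - g.num.natDegree) *
        (g.num.roots.map fun r => h.num - C r * h.denom).prod))
      (C g.denom.leadingCoeff * (h.denom ^ (ratDeg g - g.denom.natDegree) *
        (g.denom.roots.map fun r => h.num - C r * h.denom).prod)) := by
  have hg0 : g ≠ 0 := ratDeg_zero_lt hg2
  have hgnum0 : g.num ≠ 0 := RatFunc.num_ne_zero hg0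
  have hgden0 : g.denom ≠ 0 := g.denom_ne_zero
  set N := C g.num.leadingCoeff * (h.denom ^ (ratDeg g - g.num.natDegree) *
        (g.num.roots.map fun r => h.num - C r * h.denom).prod) with hN
  set D := C g.denom.leadingCoeff * (h.denom ^ (ratDeg g - g.denom.natDegree) *
        (g.denom.roots.map fun r => h.num - C r * h.denom).prod) with hD
  have hfact : ∀ P : L[X], P ≠ 0 → C P.leadingCoeff * (h.denom ^ (ratDeg g - P.natDegree) *
        (P.roots.map fun r => h.num - C r * h.denom).prod) ≠ 0 := by
    intro P hP0
    refine mul_ne_zero (by simpa using leadingCoeff_ne_zero.mpr hP0)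
      (mul_ne_zero (pow_ne_zero _ h.denom_ne_zero) (Multiset.prod_ne_zero ?_))
    intro H
    obtain ⟨r, _, hr⟩ := Multiset.mem_map.mp H
    exact lin_ne hh2 r hr
  have hN0 : N ≠ 0 := hfact g.num hgnum0
  have hD0 : D ≠ 0 := hfact g.denom hgden0
  by_contra hnc
  have hgcdnu : ¬ IsUnit (EuclideanDomain.gcd N D) := fun hu =>
    hnc (EuclideanDomain.gcd_isUnit_iff.mp hu)
  have hdeg : (EuclideanDomain.gcd N D).degree ≠ 0 := by
    simpa [Polynomial.isUnit_iff_degree_eq_zero] using hgcdnu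
  obtain ⟨z, hz⟩ := IsAlgClosed.exists_root _ hdeg
  have hroot : ∀ {Q : L[X]}, EuclideanDomain.gcd N D ∣ Q → eval z Q = 0 := by
    intro Q hQ
    obtain ⟨c, hc⟩ := hQ
    rw [hc, eval_mul, hz, zero_mul]
  have hNz : eval z N = 0 := hroot (EuclideanDomain.gcd_dvd_left N D)
  have hDz : eval z D = 0 := hroot (EuclideanDomain.gcd_dvd_right N D)
  have heval : ∀ P : L[X], eval z (C P.leadingCoeff * (h.denom ^ (ratDeg g - P.natDegree) *
        (P.roots.map fun r => h.num - C r * h.denom).prod))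
      = P.leadingCoeff * ((eval z h.denom) ^ (ratDeg g - P.natDegree) *
        (P.roots.map fun r => eval z h.num - r * eval z h.denom).prod) := by
    intro P
    rw [eval_mul, eval_C, eval_mul, eval_pow, eval_multiset_prod, Multiset.map_map]
    simp [Function.comp]
  rw [hN, heval] at hNz
  rw [hD, heval] at hDz
  by_cases hz2 : eval z h.denom = 0
  · have hz1 : eval z h.num ≠ 0 := fun H => not_both_roots (RatFunc.isCoprime_num_denom h) z H hz2
    have hprodne : ∀ P : L[X],
        (P.roots.map fun r => eval z h.num - r * eval z h.denom).prod ≠ 0 := by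
      intro P
      apply Multiset.prod_ne_zero
      intro H
      obtain ⟨r, _, hr⟩ := Multiset.mem_map.mp H
      rw [hz2, mul_zero, sub_zero] at hr
      exact hz1 hr
    have hlt : ∀ P : L[X], P ≠ 0 → P.leadingCoeff * ((eval z h.denom) ^ (ratDeg g - P.natDegree) *
        (P.roots.map fun r => eval z h.num - r * eval z h.denom).prod) = 0 →
        P.natDegree < ratDeg g := by
      intro P hP0 hPz
      rcases mul_eq_zero.mp hPz with hl | hmul
      · exact absurd hl (leadingCoeff_ne_zero.mpr hP0)
      rcases mul_eq_zero.mp hmul with hpow | hpr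
      · rw [hz2] at hpow
        have : ratDeg g - P.natDegree ≠ 0 := by
          intro H; rw [H, pow_zero] at hpow; exact one_ne_zero hpow
        omega
      · exact absurd hpr (hprodne P)
    have h1 := hlt g.num hgnum0 hNz
    have h2 := hlt g.denom hgden0 hDz
    have hmax : max g.num.natDegree g.denom.natDegree = ratDeg g := rfl
    omega
  · set t := eval z h.num / eval z h.denom with ht
    have hrootof : ∀ P : L[X], P ≠ 0 →
        P.leadingCoeff * ((eval z h.denom) ^ (ratDeg g - P.natDegree) *
          (P.roots.map fun r => eval z h.num - r * eval z h.denom).prod) = 0 →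
        eval t P = 0 := by
      intro P hP0 hPz
      rcases mul_eq_zero.mp hPz with hl | hmul
      · exact absurd hl (leadingCoeff_ne_zero.mpr hP0)
      rcases mul_eq_zero.mp hmul with hpow | hpr
      · exact absurd hpow (pow_ne_zero _ hz2)
      · obtain ⟨y, hy, hyz⟩ := Multiset.mem_map.mp (Multiset.prod_eq_zero_iff.mp hpr)
        have hyt : y = t := by
          rw [ht, eq_div_iff hz2]
          linear_combination -hyz
        have := (mem_roots hP0).mp hy
        rwa [← hyt]
    exact not_both_roots (RatFunc.isCoprime_num_denom g) t
      (hrootof g.num hgnum0 hNz) (hrootof g.denom hgden0 hDz)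

lemma key [IsAlgClosed L] {g h : RatFunc L} (hg2 : 2 ≤ ratDeg g) (hh2 : 2 ≤ ratDeg h) :
    ratDeg (ratComp g h) = ratDeg g * ratDeg h ∧
    ∃ A B : ℤ, ordInf (ratComp g h) = A * B ∧ A.natAbs ≤ ratDeg g ∧ B.natAbs ≤ ratDeg h := by
  obtain ⟨rs, e, u, he, hu, hue, hden, hlin⟩ := exists_data hh2
  have hg0 : g ≠ 0 := ratDeg_zero_lt hg2
  have hgnum0 : g.num ≠ 0 := RatFunc.num_ne_zero hg0
  have hgden0 : g.denom ≠ 0 := g.denom_ne_zero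
  have hmaxg : max g.num.natDegree g.denom.natDegree = ratDeg g := rfl
  have ha₁ : g.num.natDegree ≤ ratDeg g := le_trans (le_max_left _ _) hmaxg.le
  have ha₂ : g.denom.natDegree ≤ ratDeg g := le_trans (le_max_right _ _) hmaxg.le
  obtain ⟨hN0, hNdeg, hNmap⟩ := comp_poly hh2 rs e u hden hlin (ratDeg g) g.num hgnum0 ha₁
  obtain ⟨hD0, hDdeg, hDmap⟩ := comp_poly hh2 rs e u hden hlin (ratDeg g) g.denom hgden0 ha₂
  have hcopND := coprime_comp hg2 hh2
  set N := C g.num.leadingCoeff * (h.denom ^ (ratDeg g - g.num.natDegree) *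
      (g.num.roots.map fun r => h.num - C r * h.denom).prod) with hNdef
  set D := C g.denom.leadingCoeff * (h.denom ^ (ratDeg g - g.denom.natDegree) *
      (g.denom.roots.map fun r => h.num - C r * h.denom).prod) with hDdef
  have hNhat : algebraMap L[X] (RatFunc L) N ≠ 0 := by simpa using RatFunc.algebraMap_ne_zero hN0
  have hDhat : algebraMap L[X] (RatFunc L) D ≠ 0 := by simpa using RatFunc.algebraMap_ne_zero hD0
  have hWne : (algebraMap L[X] (RatFunc L) h.denom) ^ (ratDeg g) ≠ 0 :=
    pow_ne_zero _ (by simpa using RatFunc.algebraMap_ne_zero h.denom_ne_zero)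
  have haevalden : aeval h g.denom ≠ 0 := by
    intro H
    rw [H, zero_mul] at hDmap
    exact hDhat hDmap
  have hcompeq : ratComp g h = algebraMap L[X] (RatFunc L) N / algebraMap L[X] (RatFunc L) D := by
    rw [ratComp, div_eq_div_iff haevalden hDhat, hNmap, hDmap]
    ring
  obtain ⟨hnumdeg, hdendeg⟩ := num_denom_of_div hN0 hD0 hcopND
  have hratdeg_eq : ratDeg (ratComp g h) = max N.natDegree D.natDegree := by
    rw [hcompeq, ratDeg, hnumdeg, hdendeg]
  have hint : ordInf (ratComp g h) = (D.natDegree : ℤ) - (N.natDegree : ℤ) := by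
    rw [hcompeq, ordInf, RatFunc.intDegree, hnumdeg, hdendeg]
    ring
  set c₁ := g.num.roots.count rs with hc₁def
  set c₂ := g.denom.roots.count rs with hc₂def
  have hc₁ : c₁ ≤ ratDeg g :=
    le_trans (Multiset.count_le_card _ _) (le_trans g.num.card_roots' ha₁)
  have hc₂ : c₂ ≤ ratDeg g :=
    le_trans (Multiset.count_le_card _ _) (le_trans g.denom.card_roots' ha₂)
  set w₁ : ℤ := ((ratDeg g : ℤ) - g.num.natDegree) * u + c₁ * e with hw₁def
  set w₂ : ℤ := ((ratDeg g : ℤ) - g.denom.natDegree) * u + c₂ * e with hw₂def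
  have hw₁n : 0 ≤ w₁ := by
    rw [hw₁def]
    exact add_nonneg (mul_nonneg (by omega) (by positivity)) (by positivity)
  have hw₂n : 0 ≤ w₂ := by
    rw [hw₂def]
    exact add_nonneg (mul_nonneg (by omega) (by positivity)) (by positivity)
  have hvan : w₁ = 0 ∨ w₂ = 0 := by
    rcases hue with hu0 | he0
    · by_cases he0 : e = 0
      · left
        rw [hw₁def, hu0, he0]
        push_cast
        ring
      · by_cases hcz : c₁ = 0
        · left
          rw [hw₁def, hu0, hcz]
          push_cast
          ring
        · right
          have hcz2 : c₂ = 0 := by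
            by_contra hcz2
            have hr1 : g.num.IsRoot rs :=
              (mem_roots hgnum0).mp (Multiset.count_pos.mp (by omega))
            have hr2 : g.denom.IsRoot rs :=
              (mem_roots hgden0).mp (Multiset.count_pos.mp (by omega))
            exact not_both_roots (RatFunc.isCoprime_num_denom g) rs hr1 hr2
          rw [hw₂def, hu0, hcz2]
          push_cast
          ring
    · have : g.num.natDegree = ratDeg g ∨ g.denom.natDegree = ratDeg g := by omega
      rcases this with h1 | h1
      · left
        rw [hw₁def, he0, h1]
        push_cast
        ring
      · right
        rw [hw₂def, he0, h1]
        push_cast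
        ring
  constructor
  · rw [hratdeg_eq]
    have hcast : ((ratDeg g * ratDeg h : ℕ) : ℤ) = (ratDeg g : ℤ) * ratDeg h := by
      push_cast; ring
    rw [← hcast] at hNdeg hDdeg
    omega
  · have hordeq : ordInf (ratComp g h) = w₁ - w₂ := by
      rw [hint, hNdeg, hDdeg]
      ring
    rcases hue with hu0 | he0
    · refine ⟨(c₁ : ℤ) - c₂, (e : ℤ), ?_, by omega, by omega⟩
      rw [hordeq, hw₁def, hw₂def, hu0]
      push_cast
      ring
    · refine ⟨(g.denom.natDegree : ℤ) - g.num.natDegree, (u : ℤ), ?_, by omega, by omega⟩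
      rw [hordeq, hw₁def, hw₂def, he0]
      push_cast
      ring

end Stmt8Aux

/-- Let `K` be a field with algebraic closure `K̄`, and let
`f ∈ K(x)` be nonzero with `deg f ≥ 2`; let `d` be the greatest proper divisor of
`deg f`.  If `ord_∞ f ≠ 0` is divisible by a prime `p > d`, then `f` is prime over
`K̄`: there do not exist `g, h ∈ K̄(x)` with `deg g ≥ 2`, `deg h ≥ 2` and
`f̄ = g ∘ h`. -/
theorem stmt_8 {K Kbar : Type*} [Field K] [Field Kbar] [Algebra K Kbar]
    [IsAlgClosure K Kbar] (f : RatFunc K) (hf0 : f ≠ 0) (hdeg : 2 ≤ ratDeg f)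
    (d : ℕ) (hd : d ∣ ratDeg f) (hdlt : d < ratDeg f)
    (hdmax : ∀ e : ℕ, e ∣ ratDeg f → e < ratDeg f → e ≤ d)
    (hord : ordInf f ≠ 0) (p : ℕ) (hp : p.Prime) (hpd : d < p)
    (hdvd : (p : ℤ) ∣ ordInf f) :
    ¬ ∃ g h : RatFunc Kbar, 2 ≤ ratDeg g ∧ 2 ≤ ratDeg h ∧
      ratMap (Kbar := Kbar) f = ratComp g h := by
  classical
  rintro ⟨g, h, hg2, hh2, heq⟩
  haveI : IsAlgClosed Kbar := IsAlgClosure.isAlgClosed K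
  have hnum0 : f.num ≠ 0 := RatFunc.num_ne_zero hf0
  have hden0 : f.denom ≠ 0 := f.denom_ne_zero
  have hmn0 : f.num.map (algebraMap K Kbar) ≠ 0 := Polynomial.map_ne_zero hnum0
  have hmd0 : f.denom.map (algebraMap K Kbar) ≠ 0 := Polynomial.map_ne_zero hden0
  have hcop : IsCoprime (f.num.map (algebraMap K Kbar)) (f.denom.map (algebraMap K Kbar)) := by
    have := (RatFunc.isCoprime_num_denom f).map (Polynomial.mapRingHom (algebraMap K Kbar))
    simpa using this
  obtain ⟨hnd1, hnd2⟩ := Stmt8Aux.num_denom_of_div hmn0 hmd0 hcop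
  have hratdeg : ratDeg (ratMap (Kbar := Kbar) f) = ratDeg f := by
    unfold ratMap ratDeg
    rw [hnd1, hnd2, Polynomial.natDegree_map, Polynomial.natDegree_map]
  have hordm : ordInf (ratMap (Kbar := Kbar) f) = ordInf f := by
    unfold ratMap ordInf RatFunc.intDegree
    rw [hnd1, hnd2, Polynomial.natDegree_map, Polynomial.natDegree_map]
  obtain ⟨hdegmul, A, B, hAB, hA, hB⟩ := Stmt8Aux.key hg2 hh2
  rw [heq] at hratdeg hordm
  have hNf : ratDeg f = ratDeg g * ratDeg h := by rw [← hratdeg, hdegmul]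
  have hm_lt : ratDeg g < ratDeg f := by rw [hNf]; nlinarith
  have hn_lt : ratDeg h < ratDeg f := by rw [hNf]; nlinarith
  have hm_d : ratDeg g ≤ d := hdmax _ ⟨ratDeg h, hNf⟩ hm_lt
  have hn_d : ratDeg h ≤ d := hdmax _ ⟨ratDeg g, by rw [hNf, mul_comm]⟩ hn_lt
  have hordf : ordInf f = A * B := by rw [← hordm, hAB]
  have hpZ : Prime (p : ℤ) := Nat.prime_iff_prime_int.mp hp
  rw [hordf] at hdvd
  rcases (hpZ.2.2 A B hdvd) with hdA | hdB
  · have hA0 : A.natAbs ≠ 0 := by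
      intro H
      exact hord (by rw [hordf, Int.natAbs_eq_zero.mp H, zero_mul])
    have hpA : p ∣ A.natAbs := by
      have := Int.natAbs_dvd_natAbs.mpr hdA
      simpa using this
    have := Nat.le_of_dvd (by omega) hpA
    omega
  · have hB0 : B.natAbs ≠ 0 := by
      intro H
      exact hord (by rw [hordf, Int.natAbs_eq_zero.mp H, mul_zero])
    have hpB : p ∣ B.natAbs := by
      have := Int.natAbs_dvd_natAbs.mpr hdB
      simpa using this
    have := Nat.le_of_dvd (by omega) hpB
    omega
end

section
/- Let f ∈ ℂ[x] be a polynomial with deg f ≥ 2, and let d be the greatest proper divisor of deg f. If there exist a ∈ ℂ and a prime number p with p > d such that v_f(a) = p (equivalently, a is a root of the derivative f′ of multiplicity p − 1), then f is prime: there do not exist g, h ∈ ℂ[x] with deg g ≥ 2 and deg h ≥ 2 such that f = g ∘ h. -/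
open Polynomial

lemma deriv_ne_zero_of_two_le {q : Polynomial ℂ} (hq : 2 ≤ q.natDegree) :
    derivative q ≠ 0 := fun h =>
  by have := natDegree_eq_zero_of_derivative_eq_zero h; omega

lemma rootMult_pow (a : ℂ) (q : Polynomial ℂ) (hq : q ≠ 0) (k : ℕ) :
    rootMultiplicity a (q ^ k) = k * rootMultiplicity a q := by
  induction k with
  | zero => simp [rootMultiplicity_eq_zero, IsRoot]
  | succ n ih =>
      rw [pow_succ, rootMultiplicity_mul (mul_ne_zero (pow_ne_zero _ hq) hq), ih]
      ring

/-- Let `f ∈ ℂ[x]` with `deg f ≥ 2` and `d` the greatest proper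
divisor of `deg f`.  If there exist `a ∈ ℂ` and a prime `p > d` with `v_f(a) = p`
(i.e. `a` is a root of `f'` of multiplicity `p − 1`), then `f` is prime: there do
not exist `g, h ∈ ℂ[x]` with `deg g ≥ 2`, `deg h ≥ 2` and `f = g ∘ h`. -/
theorem stmt_9 (f : Polynomial ℂ) (hdeg : 2 ≤ f.natDegree)
    (d : ℕ) (hd : d ∣ f.natDegree) (hdlt : d < f.natDegree)
    (hdmax : ∀ e : ℕ, e ∣ f.natDegree → e < f.natDegree → e ≤ d)
    (a : ℂ) (p : ℕ) (hp : p.Prime) (hpd : d < p)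
    (hval : (derivative f).rootMultiplicity a = p - 1) :
    ¬ ∃ g h : Polynomial ℂ, 2 ≤ g.natDegree ∧ 2 ≤ h.natDegree ∧ f = g.comp h := by
  rintro ⟨g, h, hg, hh, rfl⟩
  have hfd : (g.comp h).natDegree = g.natDegree * h.natDegree := natDegree_comp
  -- bounds on degrees
  have hgle : g.natDegree ≤ d := by
    refine hdmax _ ⟨h.natDegree, hfd⟩ ?_
    calc g.natDegree < g.natDegree * h.natDegree := by nlinarith
    _ = (g.comp h).natDegree := hfd.symm
  have hhle : h.natDegree ≤ d := by
    refine hdmax _ ⟨g.natDegree, by rw [hfd]; ring⟩ ?_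
    calc h.natDegree < g.natDegree * h.natDegree := by nlinarith
    _ = (g.comp h).natDegree := hfd.symm
  -- nonvanishing of derivatives
  have hg' : derivative g ≠ 0 := deriv_ne_zero_of_two_le hg
  have hh' : derivative h ≠ 0 := deriv_ne_zero_of_two_le hh
  set b : ℂ := h.eval a with hb
  set k : ℕ := rootMultiplicity b (derivative g) with hk
  obtain ⟨q, hq, hqnd⟩ := (derivative g).exists_eq_pow_rootMultiplicity_mul_and_not_dvd hg' b
  have hqb : q.eval b ≠ 0 := fun he => hqnd (dvd_iff_isRoot.2 he)
  -- h - C b facts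
  have hhCb : h - C b ≠ 0 := fun he => by
    have : (h - C b).natDegree = h.natDegree := natDegree_sub_C
    rw [he, natDegree_zero] at this; omega
  set m : ℕ := rootMultiplicity a (derivative h) with hm
  have hroot : (h - C b).IsRoot a := by simp [IsRoot, hb]
  have hmul1 : 1 ≤ rootMultiplicity a (h - C b) :=
    (le_rootMultiplicity_iff hhCb).2 (by simpa using dvd_iff_isRoot.2 hroot)
  have hder : rootMultiplicity a (derivative (h - C b)) = rootMultiplicity a (h - C b) - 1 :=
    derivative_rootMultiplicity_of_root hroot
  have hderh : derivative (h - C b) = derivative h := by simp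
  have hmval : rootMultiplicity a (h - C b) = m + 1 := by
    rw [hderh] at hder; omega
  -- q.comp h nonzero at a
  have hqcomp : (q.comp h).eval a = q.eval b := by rw [eval_comp]
  have hqcomp0 : ¬ (q.comp h).IsRoot a := by rw [IsRoot, hqcomp]; exact hqb
  have hqcompne : q.comp h ≠ 0 := fun he => hqcomp0 (by simp [he, IsRoot])
  -- expand derivative of composition
  have hdf : derivative (g.comp h) =
      derivative h * ((h - C b) ^ k * q.comp h) := by
    rw [derivative_comp, hq]
    congr 1
    rw [mul_comp, pow_comp, sub_comp, X_comp, C_comp]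
  have hne : derivative h * ((h - C b) ^ k * q.comp h) ≠ 0 :=
    mul_ne_zero hh' (mul_ne_zero (pow_ne_zero _ hhCb) hqcompne)
  have hcount : rootMultiplicity a (derivative (g.comp h)) = m + (k * (m + 1) + 0) := by
    rw [hdf, rootMultiplicity_mul hne,
      rootMultiplicity_mul (mul_ne_zero (pow_ne_zero _ hhCb) hqcompne),
      rootMult_pow a _ hhCb, hmval, rootMultiplicity_eq_zero hqcomp0, ← hm]
  rw [hval] at hcount
  have hp1 : 1 ≤ p := hp.one_lt.le.trans' (by norm_num)
  have hpeq : p = (k + 1) * (m + 1) := by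
    have : p - 1 = m + k * (m + 1) := by omega
    have h2 : p = m + k * (m + 1) + 1 := by omega
    rw [h2]; ring
  -- bounds: k ≤ g.natDegree - 1, m ≤ h.natDegree - 1
  have hkle : k ≤ (derivative g).natDegree := by
    have hdvd : (X - C b) ^ k ∣ derivative g := pow_rootMultiplicity_dvd _ _
    have := natDegree_le_of_dvd hdvd hg'
    rwa [natDegree_pow, natDegree_X_sub_C, mul_one] at this
  have hmle : m ≤ (derivative h).natDegree := by
    have hdvd : (X - C a) ^ m ∣ derivative h := pow_rootMultiplicity_dvd _ _
    have := natDegree_le_of_dvd hdvd hh'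
    rwa [natDegree_pow, natDegree_X_sub_C, mul_one] at this
  have hgder : (derivative g).natDegree < g.natDegree := natDegree_derivative_lt (by omega)
  have hhder : (derivative h).natDegree < h.natDegree := natDegree_derivative_lt (by omega)
  -- conclude
  have hkdvd : (k + 1) ∣ p := ⟨m + 1, hpeq⟩
  rcases (Nat.Prime.eq_one_or_self_of_dvd hp _ hkdvd) with h1 | h1
  · -- k = 0, so p = m + 1 ≤ h.natDegree ≤ d < p
    have : p = m + 1 := by rw [hpeq, h1, one_mul]
    omega
  · -- k + 1 = p, but k + 1 ≤ g.natDegree ≤ d < p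
    omega
end

section
/- Let K be a field and let f, g, h ∈ K[x] with f = g ∘ h, where g and h are nonconstant and f′ ≠ 0. Then there exists a nonzero constant a ∈ K such that, as an identity of polynomials in K[t], Res_X(f(X) − t, f′(X)) = a · (Res_X(g(X) − t, g′(X)))^{deg h} · Res_X(f(X) − t, h′(X)). -/
open Polynomial

/-- The Sylvester matrix of two polynomials `p, q ∈ R[X]` (with respect to their
`natDegree`s): the first `deg q` rows hold the coefficients of `p`, shifted, and
the last `deg p` rows hold the coefficients of `q`, shifted. -/
noncomputable def sylvesterMatrix {R : Type*} [CommRing R] (p q : Polynomial R) :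
    Matrix (Fin (q.natDegree + p.natDegree)) (Fin (q.natDegree + p.natDegree)) R :=
  Matrix.of fun i j =>
    if (i : ℕ) < q.natDegree then
      if (j : ℕ) ≤ p.natDegree + i then p.coeff (p.natDegree + i - j) else 0
    else
      if (j : ℕ) ≤ (i : ℕ) then q.coeff ((i : ℕ) - j) else 0

/-- The resultant `Res_X(p, q)` of two polynomials, as the determinant of their
Sylvester matrix. -/
noncomputable def resultant {R : Type*} [CommRing R] (p q : Polynomial R) : R :=
  (sylvesterMatrix p q).det

open Matrix

section ProdFormula

variable {F : Type*} [Field F]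

def auxVec {n : ℕ} (α : Fin n → F) : ℕ → F := fun j => if h : j < n then α ⟨j, h⟩ else 0

noncomputable def auxV (m N : ℕ) (β : ℕ → F) : Matrix (Fin N) (Fin N) F :=
  Matrix.of fun k j =>
    if (j : ℕ) < m then (if (k : ℕ) = (j : ℕ) then 1 else 0)
    else β ((j : ℕ) - m) ^ (N - 1 - (k : ℕ))

noncomputable def auxA (p : Polynomial F) (m : ℕ) : Matrix (Fin m) (Fin m) F :=
  Matrix.of fun i j =>
    if (j : ℕ) ≤ p.natDegree + (i : ℕ) then p.coeff (p.natDegree + (i : ℕ) - (j : ℕ)) else 0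

noncomputable def auxW {n : ℕ} (α : Fin n → F) : Matrix (Fin n) (Fin n) F :=
  Matrix.of fun r i' => α i' ^ (n - 1 - (r : ℕ))

lemma sum_helper (p : Polynomial F) (x : F) (N i : ℕ) (hiN : p.natDegree + i < N) (e : ℕ)
    (he : e = N - 1 - (p.natDegree + i)) :
    (∑ k ∈ Finset.range N,
      (if k ≤ p.natDegree + i then p.coeff (p.natDegree + i - k) else 0) * x ^ (N - 1 - k))
      = x ^ e * p.eval x := by
  have hsub : Finset.range (p.natDegree + i + 1) ⊆ Finset.range N := by
    apply Finset.range_subset_range.2; omega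
  rw [← Finset.sum_subset hsub (fun k _ hk => by
    rw [if_neg (by simp only [Finset.mem_range] at hk; omega), zero_mul])]
  rw [Finset.sum_congr rfl (fun k hk => by
    rw [if_pos (by simp only [Finset.mem_range] at hk; omega)])]
  rw [← Finset.sum_range_reflect]
  rw [Finset.sum_congr rfl (fun d hd => by
    simp only [Finset.mem_range] at hd
    have h1 : p.natDegree + i - (p.natDegree + i + 1 - 1 - d) = d := by omega
    have h2 : N - 1 - (p.natDegree + i + 1 - 1 - d) = e + d := by omega
    rw [h1, h2, pow_add, ← mul_assoc, mul_comm (p.coeff d) (x ^ e), mul_assoc])]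
  rw [← Finset.mul_sum]
  congr 1
  rw [eval_eq_sum_range' (by omega : p.natDegree < p.natDegree + i + 1)]

lemma auxW_det_ne_zero {n : ℕ} (α : Fin n → F) (hinj : Function.Injective α) :
    (auxW α).det ≠ 0 := by
  have hW : auxW α = ((Matrix.vandermonde α).submatrix id (Fin.rev : Fin n → Fin n))ᵀ := by
    ext r i'
    simp [auxW, Matrix.vandermonde, Fin.val_rev]
    congr 1
    omega
  rw [hW, Matrix.det_transpose]
  rw [show ((Matrix.vandermonde α).submatrix id (Fin.rev : Fin n → Fin n))
      = (Matrix.vandermonde α).submatrix id ⇑(Fin.revPerm : Equiv.Perm (Fin n)) from rfl]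
  rw [Matrix.det_permute' Fin.revPerm (Matrix.vandermonde α)]
  apply mul_ne_zero _ (Matrix.det_vandermonde_ne_zero_iff.2 hinj)
  rcases Int.units_eq_one_or (Equiv.Perm.sign (Fin.revPerm : Equiv.Perm (Fin n))) with h | h <;>
    rw [h] <;> simp

end ProdFormula

section ProdFormula2
variable {F : Type*} [Field F]

lemma resultant_eq_prod_aux (P Q : Polynomial F)
    (α : Fin P.natDegree → F) (hinj : Function.Injective α)
    (hroot : ∀ i, P.eval (α i) = 0) :
    _root_.resultant P Q = P.leadingCoeff ^ Q.natDegree * ∏ i, Q.eval (α i) := by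
  classical
  set S := sylvesterMatrix P Q with hS
  set V := auxV Q.natDegree (Q.natDegree + P.natDegree) (auxVec α) with hV
  set A := auxA P Q.natDegree with hA
  set W := auxW α with hW
  set D := W * Matrix.diagonal (fun i' => Q.eval (α i')) with hD
  set Cm : Matrix (Fin P.natDegree) (Fin Q.natDegree) F :=
    Matrix.of (fun r j => (S * V) (Fin.natAdd Q.natDegree r) (Fin.castAdd P.natDegree j)) with hCm
  have hSV : (S * V).submatrix
      (finSumFinEquiv : Fin Q.natDegree ⊕ Fin P.natDegree ≃ _) finSumFinEquiv
      = Matrix.fromBlocks A 0 Cm D := by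
    ext i j
    cases i with
    | inl i =>
      cases j with
      | inl j =>
        simp only [Matrix.submatrix_apply, finSumFinEquiv_apply_left,
          Matrix.fromBlocks_apply₁₁, Matrix.mul_apply]
        refine (Finset.sum_eq_single (Fin.castAdd P.natDegree j) ?_ ?_).trans ?_
        · intro b _ hb
          have hb0 : V b (Fin.castAdd P.natDegree j) = 0 := by
            simp only [hV, auxV, Matrix.of_apply, Fin.coe_castAdd]
            rw [if_pos j.isLt, if_neg (show ¬((b:ℕ) = (j:ℕ)) from fun hc => hb (Fin.ext hc))]
          rw [hb0, mul_zero]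
        · intro hmem; exact absurd (Finset.mem_univ _) hmem
        · have h1 : V (Fin.castAdd P.natDegree j) (Fin.castAdd P.natDegree j) = 1 := by
            simp only [hV, auxV, Matrix.of_apply, Fin.coe_castAdd]
            rw [if_pos j.isLt]
            simp
          rw [h1, mul_one, hS, hA]
          simp only [sylvesterMatrix, auxA, Matrix.of_apply, Fin.coe_castAdd]
          rw [if_pos i.isLt]
      | inr j =>
        simp only [Matrix.submatrix_apply, finSumFinEquiv_apply_left, finSumFinEquiv_apply_right,
          Matrix.fromBlocks_apply₁₂, Matrix.mul_apply, Matrix.zero_apply]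
        have hterm : ∀ k : Fin (Q.natDegree + P.natDegree),
            S (Fin.castAdd P.natDegree i) k * V k (Fin.natAdd Q.natDegree j)
            = (if (k:ℕ) ≤ P.natDegree + (i:ℕ) then P.coeff (P.natDegree + (i:ℕ) - (k:ℕ)) else 0)
              * (α j) ^ (Q.natDegree + P.natDegree - 1 - (k:ℕ)) := by
          intro k
          have hSval : S (Fin.castAdd P.natDegree i) k
              = (if (k:ℕ) ≤ P.natDegree + (i:ℕ) then P.coeff (P.natDegree + (i:ℕ) - (k:ℕ)) else 0) := by
            simp only [hS, sylvesterMatrix, Matrix.of_apply, Fin.coe_castAdd]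
            rw [if_pos i.isLt]
          have hVval : V k (Fin.natAdd Q.natDegree j)
              = (α j) ^ (Q.natDegree + P.natDegree - 1 - (k:ℕ)) := by
            simp only [hV, auxV, Matrix.of_apply, Fin.coe_natAdd]
            rw [if_neg (by omega)]
            have hx : Q.natDegree + (j:ℕ) - Q.natDegree = (j:ℕ) := by omega
            rw [hx]
            simp [auxVec, j.isLt]
          rw [hSval, hVval]
        rw [Finset.sum_congr rfl (fun k _ => hterm k)]
        rw [Fin.sum_univ_eq_sum_range (fun k =>
          (if k ≤ P.natDegree + (i:ℕ) then P.coeff (P.natDegree + (i:ℕ) - k) else 0)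
            * (α j) ^ (Q.natDegree + P.natDegree - 1 - k))]
        rw [sum_helper P (α j) (Q.natDegree + P.natDegree) (i:ℕ)
          (by have := i.isLt; omega) _ rfl, hroot j, mul_zero]
    | inr r =>
      cases j with
      | inl j =>
        simp only [Matrix.submatrix_apply, finSumFinEquiv_apply_left, finSumFinEquiv_apply_right,
          Matrix.fromBlocks_apply₂₁, hCm, Matrix.of_apply]
      | inr j =>
        simp only [Matrix.submatrix_apply, finSumFinEquiv_apply_right,
          Matrix.fromBlocks_apply₂₂, Matrix.mul_apply]
        have hterm : ∀ k : Fin (Q.natDegree + P.natDegree),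
            S (Fin.natAdd Q.natDegree r) k * V k (Fin.natAdd Q.natDegree j)
            = (if (k:ℕ) ≤ Q.natDegree + (r:ℕ) then Q.coeff (Q.natDegree + (r:ℕ) - (k:ℕ)) else 0)
              * (α j) ^ (Q.natDegree + P.natDegree - 1 - (k:ℕ)) := by
          intro k
          have hSval : S (Fin.natAdd Q.natDegree r) k
              = (if (k:ℕ) ≤ Q.natDegree + (r:ℕ) then Q.coeff (Q.natDegree + (r:ℕ) - (k:ℕ)) else 0) := by
            simp only [hS, sylvesterMatrix, Matrix.of_apply, Fin.coe_natAdd]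
            rw [if_neg (by omega)]
          have hVval : V k (Fin.natAdd Q.natDegree j)
              = (α j) ^ (Q.natDegree + P.natDegree - 1 - (k:ℕ)) := by
            simp only [hV, auxV, Matrix.of_apply, Fin.coe_natAdd]
            rw [if_neg (by omega)]
            have hx : Q.natDegree + (j:ℕ) - Q.natDegree = (j:ℕ) := by omega
            rw [hx]
            simp [auxVec, j.isLt]
          rw [hSval, hVval]
        rw [Finset.sum_congr rfl (fun k _ => hterm k)]
        rw [Fin.sum_univ_eq_sum_range (fun k =>
          (if k ≤ Q.natDegree + (r:ℕ) then Q.coeff (Q.natDegree + (r:ℕ) - k) else 0)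
            * (α j) ^ (Q.natDegree + P.natDegree - 1 - k))]
        rw [sum_helper Q (α j) (Q.natDegree + P.natDegree) (r:ℕ)
          (by have := r.isLt; omega) _ rfl]
        rw [hD, hW]
        simp only [Matrix.mul_diagonal, auxW, Matrix.of_apply]
        have hx2 : Q.natDegree + P.natDegree - 1 - (Q.natDegree + (r:ℕ))
            = P.natDegree - 1 - (r:ℕ) := by omega
        rw [hx2]
  have hdet1 : S.det * V.det = A.det * D.det := by
    calc S.det * V.det = (S * V).det := (Matrix.det_mul S V).symm
    _ = ((S * V).submatrix finSumFinEquiv finSumFinEquiv).det :=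
        (Matrix.det_submatrix_equiv_self _ _).symm
    _ = (Matrix.fromBlocks A 0 Cm D).det := by rw [hSV]
    _ = A.det * D.det := Matrix.det_fromBlocks_zero₁₂ _ _ _
  have hAdet : A.det = P.leadingCoeff ^ Q.natDegree := by
    rw [hA, Matrix.det_of_upperTriangular (by
      intro i j hij
      have hij' : (j:ℕ) < (i:ℕ) := hij
      simp only [auxA, Matrix.of_apply]
      rw [if_pos (by omega)]
      exact Polynomial.coeff_eq_zero_of_natDegree_lt (by omega))]
    have hdiag : ∀ i : Fin Q.natDegree, auxA P Q.natDegree i i = P.leadingCoeff := by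
      intro i
      simp only [auxA, Matrix.of_apply]
      rw [if_pos (by omega)]
      have : P.natDegree + (i:ℕ) - (i:ℕ) = P.natDegree := by omega
      rw [this, Polynomial.coeff_natDegree]
    rw [Finset.prod_congr rfl (fun i _ => hdiag i)]
    simp
  have hDdet : D.det = W.det * ∏ i', Q.eval (α i') := by
    rw [hD, Matrix.det_mul, Matrix.det_diagonal]
  have hWne : W.det ≠ 0 := auxW_det_ne_zero α hinj
  have hVdet : V.det = W.det := by
    have hblocks : V.submatrix
        (finSumFinEquiv : Fin Q.natDegree ⊕ Fin P.natDegree ≃ _) finSumFinEquiv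
        = Matrix.fromBlocks 1
            (Matrix.of fun k j => V (Fin.castAdd P.natDegree k) (Fin.natAdd Q.natDegree j))
            0 W := by
      ext i j
      cases i with
      | inl k =>
        cases j with
        | inl j =>
          simp only [Matrix.submatrix_apply, finSumFinEquiv_apply_left,
            Matrix.fromBlocks_apply₁₁, hV, auxV, Matrix.of_apply, Fin.coe_castAdd,
            Matrix.one_apply]
          rw [if_pos j.isLt]
          by_cases hkj : k = j
          · rw [if_pos (by rw [hkj]), if_pos hkj]
          · rw [if_neg (fun hc => hkj (Fin.ext hc)), if_neg hkj]
        | inr j =>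
          simp only [Matrix.submatrix_apply, finSumFinEquiv_apply_left,
            finSumFinEquiv_apply_right, Matrix.fromBlocks_apply₁₂, Matrix.of_apply]
      | inr r =>
        cases j with
        | inl j =>
          simp only [Matrix.submatrix_apply, finSumFinEquiv_apply_left,
            finSumFinEquiv_apply_right, Matrix.fromBlocks_apply₂₁, hV, auxV, Matrix.of_apply,
            Fin.coe_castAdd, Fin.coe_natAdd, Matrix.zero_apply]
          rw [if_pos j.isLt, if_neg (by have := j.isLt; omega)]
        | inr j =>
          simp only [Matrix.submatrix_apply, finSumFinEquiv_apply_right,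
            Matrix.fromBlocks_apply₂₂, hV, auxV, hW, auxW, Matrix.of_apply, Fin.coe_natAdd]
          rw [if_neg (by omega)]
          have hx : Q.natDegree + (j:ℕ) - Q.natDegree = (j:ℕ) := by omega
          have hx2 : Q.natDegree + P.natDegree - 1 - (Q.natDegree + (r:ℕ))
              = P.natDegree - 1 - (r:ℕ) := by omega
          rw [hx, hx2]
          simp [auxVec, j.isLt]
    calc V.det = (V.submatrix finSumFinEquiv finSumFinEquiv).det :=
        (Matrix.det_submatrix_equiv_self _ _).symm
    _ = W.det := by rw [hblocks, Matrix.det_fromBlocks_zero₂₁, Matrix.det_one, one_mul]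
  rw [hVdet, hAdet, hDdet] at hdet1
  have final : S.det = P.leadingCoeff ^ Q.natDegree * ∏ i', Q.eval (α i') :=
    mul_right_cancel₀ hWne (by rw [hdet1]; ring)
  exact final

end ProdFormula2

section MoreLemmas
variable {F : Type*} [Field F]

lemma resultant_eq_prod (P Q : Polynomial F)
    (hcard : Multiset.card P.roots = P.natDegree) (hnodup : P.roots.Nodup) :
    _root_.resultant P Q = P.leadingCoeff ^ Q.natDegree
      * (P.roots.map (fun x => Q.eval x)).prod := by
  classical
  have hlen : P.roots.toList.length = P.natDegree := by
    rw [Multiset.length_toList, hcard]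
  have hnodup' : P.roots.toList.Nodup :=
    Multiset.coe_nodup.mp (by rw [Multiset.coe_toList]; exact hnodup)
  set l := P.roots.toList with hl
  let α : Fin P.natDegree → F := fun i => l.get (Fin.cast hlen.symm i)
  have hinj : Function.Injective α := by
    intro a b hab
    have := List.nodup_iff_injective_get.mp hnodup' hab
    have hval : ((Fin.cast hlen.symm a) : ℕ) = ((Fin.cast hlen.symm b) : ℕ) :=
      congrArg Fin.val this
    exact Fin.ext hval
  have hroot : ∀ i, P.eval (α i) = 0 := by
    intro i
    have hmem : α i ∈ P.roots := by
      rw [← Multiset.mem_toList]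
      exact List.get_mem l _
    exact (Polynomial.isRoot_of_mem_roots hmem)
  rw [resultant_eq_prod_aux P Q α hinj hroot]
  congr 1
  have h1 : P.roots = (l : Multiset F) := (Multiset.coe_toList _).symm
  rw [h1]
  have h2 : ((l : Multiset F).map (fun x => Q.eval x)).prod = (l.map (fun x => Q.eval x)).prod := by
    rw [Multiset.map_coe, Multiset.prod_coe]
  rw [h2]
  have h3 : l.map (fun x => Q.eval x) = List.ofFn ((fun x => Q.eval x) ∘ l.get) := by
    conv_lhs => rw [← List.ofFn_get l]
    rw [List.map_ofFn]
  rw [h3, List.prod_ofFn]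
  exact (Fintype.prod_equiv (finCongr hlen) _ _ (fun i => rfl)).symm

lemma roots_nodup_of_derivative (p : Polynomial F)
    (hp : ∀ a : F, p.IsRoot a → (derivative p).eval a ≠ 0) : p.roots.Nodup := by
  classical
  rw [Multiset.nodup_iff_count_le_one]
  intro a
  by_contra hcontra
  push_neg at hcontra
  have h2 : 2 ≤ p.rootMultiplicity a := by
    have := Polynomial.count_roots (a := a) p
    omega
  have hdvd : (X - C a) ^ 2 ∣ p :=
    (pow_dvd_pow _ h2).trans (Polynomial.pow_rootMultiplicity_dvd p a)
  obtain ⟨u, hu⟩ := hdvd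
  have hroot : p.IsRoot a := by
    rw [Polynomial.IsRoot, hu]; simp
  apply hp a hroot
  rw [hu]
  simp [derivative_mul, derivative_pow, derivative_X, derivative_C]

end MoreLemmas

section MapLemma

lemma resultant_map {R S : Type*} [CommRing R] [CommRing S] (φ : R →+* S) (p q : Polynomial R)
    (hp : (p.map φ).natDegree = p.natDegree) (hq : (q.map φ).natDegree = q.natDegree) :
    _root_.resultant (p.map φ) (q.map φ) = φ (_root_.resultant p q) := by
  unfold _root_.resultant
  rw [RingHom.map_det, RingHom.mapMatrix_apply]
  have e : (q.map φ).natDegree + (p.map φ).natDegree = q.natDegree + p.natDegree := by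
    rw [hp, hq]
  rw [← Matrix.det_submatrix_equiv_self (finCongr e) ((sylvesterMatrix p q).map ⇑φ)]
  congr 1
  ext i j
  simp only [sylvesterMatrix, Matrix.submatrix_apply, Matrix.map_apply, Matrix.of_apply,
    finCongr_apply, Fin.coe_cast, hp, hq, Polynomial.coeff_map]
  split_ifs with h1 h2 h2 <;> simp

end MapLemma

section AlgAux

lemma alg_aux {K Ω : Type*} [Field K] [Field Ω] (k : K →+* Ω) (τ : Ω)
    (htrans : ∀ p : Polynomial K, p ≠ 0 → (p.map k).eval τ ≠ 0)
    (p q : Polynomial K) (hq : q ≠ 0) (a : Ω) (hqa : (q.map k).eval a = 0)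
    (hpa : (p.map k).eval a = τ) : False := by
  letI : Algebra K Ω := k.toAlgebra
  have halgmap : (algebraMap K Ω) = k := rfl
  have halg : IsIntegral K a := by
    apply IsAlgebraic.isIntegral
    refine ⟨q, hq, ?_⟩
    rw [Polynomial.aeval_def, ← Polynomial.eval_map, halgmap]
    exact hqa
  have hτint : IsIntegral K τ := by
    have heval : (p.map k).eval a = Polynomial.aeval a p := by
      rw [Polynomial.aeval_def, Polynomial.eval_map, halgmap]
    rw [← hpa, heval]
    exact IsIntegral.of_mem_of_fg (Algebra.adjoin K {a}) halg.fg_adjoin_singleton _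
      (Polynomial.aeval_mem_adjoin_singleton K a)
  obtain ⟨m, hm0, hm⟩ := hτint.isAlgebraic
  apply htrans m hm0
  rw [Polynomial.aeval_def, ← Polynomial.eval_map, halgmap] at hm
  exact hm

end AlgAux


/-- For `f ∈ K[x]` and an auxiliary variable `t`, the polynomial `f(X) − t`
regarded as a polynomial in `X` with coefficients in `K[t]`. -/
noncomputable def polySubT {K : Type*} [Field K] (f : Polynomial K) :
    Polynomial (Polynomial K) :=
  f.map Polynomial.C - Polynomial.C Polynomial.X

/-- Let `K` be a field and `f = g ∘ h` with `f, g, h ∈ K[x]`, `g` and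
`h` nonconstant and `f' ≠ 0`.  Then there is a nonzero constant `a ∈ K` such that, in
`K[t]`, `Res_X(f(X) − t, f'(X)) = a · Res_X(g(X) − t, g'(X))^{deg h} · Res_X(f(X) − t, h'(X))`. -/
theorem stmt_10 {K : Type*} [Field K] (f g h : Polynomial K) (hfgh : f = g.comp h)
    (hg : 0 < g.natDegree) (hh : 0 < h.natDegree) (hf' : derivative f ≠ 0) :
    ∃ a : K, a ≠ 0 ∧
      _root_.resultant (polySubT f) ((derivative f).map Polynomial.C) =
        Polynomial.C a *
          (_root_.resultant (polySubT g) ((derivative g).map Polynomial.C)) ^ h.natDegree *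
          _root_.resultant (polySubT f) ((derivative h).map Polynomial.C) := by
  classical
  -- basic degree facts
  have hdf_eq : f.natDegree = g.natDegree * h.natDegree := by
    rw [hfgh, Polynomial.natDegree_comp]
  have hdf : 0 < f.natDegree := by rw [hdf_eq]; exact Nat.mul_pos hg hh
  have hfne : f ≠ 0 := fun h0 => by simp [h0] at hdf
  have hgne : g ≠ 0 := fun h0 => by simp [h0] at hg
  have hhne : h ≠ 0 := fun h0 => by simp [h0] at hh
  have hflc : f.leadingCoeff ≠ 0 := Polynomial.leadingCoeff_ne_zero.mpr hfne
  have hglc : g.leadingCoeff ≠ 0 := Polynomial.leadingCoeff_ne_zero.mpr hgne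
  -- derivatives
  have hder : derivative f = derivative h * (derivative g).comp h := by
    rw [hfgh, Polynomial.derivative_comp]
  have hg' : derivative g ≠ 0 := by
    intro h0; apply hf'; rw [hder, h0, Polynomial.zero_comp, mul_zero]
  have hh' : derivative h ≠ 0 := by
    intro h0; apply hf'; rw [hder, h0, zero_mul]
  -- the big field
  let F₀ := FractionRing (Polynomial K)
  let Ω := AlgebraicClosure F₀
  let φ : Polynomial K →+* Ω := (algebraMap F₀ Ω).comp (algebraMap (Polynomial K) F₀)
  let k : K →+* Ω := φ.comp (Polynomial.C : K →+* Polynomial K)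
  let τ : Ω := φ Polynomial.X
  have hφinj : Function.Injective ⇑φ := by
    have h1 : Function.Injective ⇑(algebraMap F₀ Ω) := (algebraMap F₀ Ω).injective
    have h2 : Function.Injective ⇑(algebraMap (Polynomial K) F₀) :=
      IsFractionRing.injective (Polynomial K) F₀
    rw [show φ = (algebraMap F₀ Ω).comp (algebraMap (Polynomial K) F₀) from rfl, RingHom.coe_comp]
    exact h1.comp h2
  have hkinj : Function.Injective ⇑k := by
    rw [show k = φ.comp (Polynomial.C : K →+* Polynomial K) from rfl, RingHom.coe_comp]
    exact hφinj.comp Polynomial.C_injective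
  have hkey : ∀ p : Polynomial K, (p.map k).eval τ = φ p := by
    intro p
    rw [Polynomial.eval_map]
    rw [show k = φ.comp (Polynomial.C : K →+* Polynomial K) from rfl]
    rw [show τ = φ Polynomial.X from rfl]
    rw [← Polynomial.hom_eval₂, Polynomial.eval₂_C_X]
  have htrans : ∀ p : Polynomial K, p ≠ 0 → (p.map k).eval τ ≠ 0 := by
    intro p hp hev
    rw [hkey] at hev
    exact hp (hφinj (by rw [hev, map_zero]))
  -- mapped polynomials
  set fb : Polynomial Ω := f.map k with hfb
  set gb : Polynomial Ω := g.map k with hgb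
  set hb : Polynomial Ω := h.map k with hhb
  have hfbdeg : fb.natDegree = f.natDegree := Polynomial.natDegree_map k
  have hgbdeg : gb.natDegree = g.natDegree := Polynomial.natDegree_map k
  have hhbdeg : hb.natDegree = h.natDegree := Polynomial.natDegree_map k
  set Fp : Polynomial Ω := fb - Polynomial.C τ with hFp
  set Gp : Polynomial Ω := gb - Polynomial.C τ with hGp
  have hFpdeg : Fp.natDegree = f.natDegree := by
    rw [hFp, Polynomial.natDegree_sub_eq_left_of_natDegree_lt, hfbdeg]
    rw [Polynomial.natDegree_C, hfbdeg]; exact hdf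
  have hGpdeg : Gp.natDegree = g.natDegree := by
    rw [hGp, Polynomial.natDegree_sub_eq_left_of_natDegree_lt, hgbdeg]
    rw [Polynomial.natDegree_C, hgbdeg]; exact hg
  have hFplc : Fp.leadingCoeff = k f.leadingCoeff := by
    rw [Polynomial.leadingCoeff, hFpdeg, hFp, Polynomial.coeff_sub, Polynomial.coeff_C,
      if_neg (by omega), sub_zero, hfb, Polynomial.coeff_map]
    rfl
  have hGplc : Gp.leadingCoeff = k g.leadingCoeff := by
    rw [Polynomial.leadingCoeff, hGpdeg, hGp, Polynomial.coeff_sub, Polynomial.coeff_C,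
      if_neg (by omega), sub_zero, hgb, Polynomial.coeff_map]
    rfl
  -- roots data
  have hFcard : Multiset.card Fp.roots = Fp.natDegree :=
    Polynomial.splits_iff_card_roots.mp (IsAlgClosed.splits Fp)
  have hGcard : Multiset.card Gp.roots = Gp.natDegree :=
    Polynomial.splits_iff_card_roots.mp (IsAlgClosed.splits Gp)
  have hFder : derivative Fp = (derivative f).map k := by
    rw [hFp, derivative_sub, Polynomial.derivative_C, sub_zero, hfb, Polynomial.derivative_map]
  have hGder : derivative Gp = (derivative g).map k := by
    rw [hGp, derivative_sub, Polynomial.derivative_C, sub_zero, hgb, Polynomial.derivative_map]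
  have hFnodup : Fp.roots.Nodup := by
    apply roots_nodup_of_derivative
    intro a ha hda
    rw [hFder] at hda
    apply alg_aux k τ htrans f (derivative f) hf' a hda
    have := ha
    rw [Polynomial.IsRoot, hFp, Polynomial.eval_sub, Polynomial.eval_C, sub_eq_zero] at this
    exact this
  have hGnodup : Gp.roots.Nodup := by
    apply roots_nodup_of_derivative
    intro a ha hda
    rw [hGder] at hda
    apply alg_aux k τ htrans g (derivative g) hg' a hda
    have := ha
    rw [Polynomial.IsRoot, hGp, Polynomial.eval_sub, Polynomial.eval_C, sub_eq_zero] at this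
    exact this
  -- _root_.resultant product formulas over Ω
  have r1 : _root_.resultant Fp ((derivative f).map k)
      = (k f.leadingCoeff) ^ (derivative f).natDegree
        * (Fp.roots.map (fun x => ((derivative f).map k).eval x)).prod := by
    rw [resultant_eq_prod Fp _ hFcard hFnodup, hFplc, Polynomial.natDegree_map]
  have r2 : _root_.resultant Gp ((derivative g).map k)
      = (k g.leadingCoeff) ^ (derivative g).natDegree
        * (Gp.roots.map (fun x => ((derivative g).map k).eval x)).prod := by
    rw [resultant_eq_prod Gp _ hGcard hGnodup, hGplc, Polynomial.natDegree_map]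
  have r3 : _root_.resultant Fp ((derivative h).map k)
      = (k f.leadingCoeff) ^ (derivative h).natDegree
        * (Fp.roots.map (fun x => ((derivative h).map k).eval x)).prod := by
    rw [resultant_eq_prod Fp _ hFcard hFnodup, hFplc, Polynomial.natDegree_map]
  -- connect with resultants over K[t]
  have hmapF : (polySubT f).map φ = Fp := by
    unfold polySubT
    rw [Polynomial.map_sub, Polynomial.map_map, Polynomial.map_C]
  have hmapG : (polySubT g).map φ = Gp := by
    unfold polySubT
    rw [Polynomial.map_sub, Polynomial.map_map, Polynomial.map_C]
  have hmapd : ∀ p : Polynomial K, (p.map Polynomial.C).map φ = p.map k := fun p => by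
    rw [Polynomial.map_map]
  have hdeg_pf : (polySubT f).natDegree = f.natDegree := by
    unfold polySubT
    rw [Polynomial.natDegree_sub_eq_left_of_natDegree_lt,
      Polynomial.natDegree_map_eq_of_injective Polynomial.C_injective]
    rw [Polynomial.natDegree_C, Polynomial.natDegree_map_eq_of_injective Polynomial.C_injective]
    exact hdf
  have hdeg_pg : (polySubT g).natDegree = g.natDegree := by
    unfold polySubT
    rw [Polynomial.natDegree_sub_eq_left_of_natDegree_lt,
      Polynomial.natDegree_map_eq_of_injective Polynomial.C_injective]
    rw [Polynomial.natDegree_C, Polynomial.natDegree_map_eq_of_injective Polynomial.C_injective]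
    exact hg
  have hres1 : φ (_root_.resultant (polySubT f) ((derivative f).map Polynomial.C))
      = _root_.resultant Fp ((derivative f).map k) := by
    rw [← resultant_map φ _ _ (by rw [hmapF, hFpdeg, hdeg_pf])
      (by rw [hmapd, Polynomial.natDegree_map,
        Polynomial.natDegree_map_eq_of_injective Polynomial.C_injective]),
      hmapF, hmapd]
  have hres2 : φ (_root_.resultant (polySubT g) ((derivative g).map Polynomial.C))
      = _root_.resultant Gp ((derivative g).map k) := by
    rw [← resultant_map φ _ _ (by rw [hmapG, hGpdeg, hdeg_pg])
      (by rw [hmapd, Polynomial.natDegree_map,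
        Polynomial.natDegree_map_eq_of_injective Polynomial.C_injective]),
      hmapG, hmapd]
  have hres3 : φ (_root_.resultant (polySubT f) ((derivative h).map Polynomial.C))
      = _root_.resultant Fp ((derivative h).map k) := by
    rw [← resultant_map φ _ _ (by rw [hmapF, hFpdeg, hdeg_pf])
      (by rw [hmapd, Polynomial.natDegree_map,
        Polynomial.natDegree_map_eq_of_injective Polynomial.C_injective]),
      hmapF, hmapd]
  -- factor Fp through roots of Gp
  have hcomp : Fp = Gp.comp hb := by
    rw [hFp, hGp, hfb, hgb, hfgh, Polynomial.map_comp, Polynomial.sub_comp, Polynomial.C_comp]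
  have hGfact : Polynomial.C Gp.leadingCoeff
      * (Gp.roots.map (fun a => X - Polynomial.C a)).prod = Gp :=
    Polynomial.C_leadingCoeff_mul_prod_multiset_X_sub_C hGcard
  have hFfact : Fp = Polynomial.C Gp.leadingCoeff
      * (Gp.roots.map (fun β => hb - Polynomial.C β)).prod := by
    conv_lhs => rw [hcomp, ← hGfact]
    rw [Polynomial.mul_comp, Polynomial.C_comp, Polynomial.multiset_prod_comp,
      Multiset.map_map]
    congr 1
    refine congrArg Multiset.prod (Multiset.map_congr rfl ?_)
    intro β _
    simp [Polynomial.sub_comp, Polynomial.X_comp, Polynomial.C_comp]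
  have hGlcne : Gp.leadingCoeff ≠ 0 := by
    rw [hGplc]
    exact fun hc => hglc (hkinj (by rw [hc, map_zero]))
  have hhbdegβ : ∀ β : Ω, (hb - Polynomial.C β).natDegree = h.natDegree := by
    intro β
    rw [Polynomial.natDegree_sub_eq_left_of_natDegree_lt, hhbdeg]
    rw [Polynomial.natDegree_C, hhbdeg]; exact hh
  have hhbne : ∀ β : Ω, hb - Polynomial.C β ≠ 0 := by
    intro β h0
    have := hhbdegβ β
    rw [h0, Polynomial.natDegree_zero] at this
    omega
  have hFroots : Fp.roots = Gp.roots.bind (fun β => (hb - Polynomial.C β).roots) := by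
    rw [hFfact, Polynomial.roots_C_mul _ hGlcne, Polynomial.roots_multiset_prod _ (by
      intro hmem
      obtain ⟨β, _, hβ⟩ := Multiset.mem_map.mp hmem
      exact hhbne β hβ), Multiset.bind_map]
  have hcardhb : ∀ β : Ω, Multiset.card ((hb - Polynomial.C β).roots) = h.natDegree := by
    intro β
    rw [Polynomial.splits_iff_card_roots.mp (IsAlgClosed.splits _), hhbdegβ β]
  -- split the product of f' over roots of Fp
  have hfb' : (derivative f).map k
      = (derivative h).map k * ((derivative g).map k).comp hb := by
    conv_lhs => rw [hder]
    rw [Polynomial.map_mul, Polynomial.map_comp]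
  have hsplit : (Fp.roots.map (fun x => ((derivative f).map k).eval x)).prod
      = (Fp.roots.map (fun x => ((derivative h).map k).eval x)).prod
        * ((Gp.roots.map (fun β => ((derivative g).map k).eval β)).prod) ^ h.natDegree := by
    have step1 : (Fp.roots.map (fun x => ((derivative f).map k).eval x)).prod
        = (Fp.roots.map (fun x => ((derivative h).map k).eval x
            * (((derivative g).map k).comp hb).eval x)).prod := by
      refine congrArg Multiset.prod (Multiset.map_congr rfl ?_)
      intro x _
      rw [hfb', Polynomial.eval_mul]
    rw [step1, Multiset.prod_map_mul]
    congr 1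
    have step2 : (Fp.roots.map (fun x => (((derivative g).map k).comp hb).eval x)).prod
        = (Fp.roots.map (fun x => ((derivative g).map k).eval (hb.eval x))).prod := by
      refine congrArg Multiset.prod (Multiset.map_congr rfl ?_)
      intro x _
      rw [Polynomial.eval_comp]
    rw [step2, hFroots, Multiset.map_bind, Multiset.prod_bind]
    have step3 : (Gp.roots.map (fun β =>
        ((hb - Polynomial.C β).roots.map (fun x => ((derivative g).map k).eval (hb.eval x))).prod)).prod
        = (Gp.roots.map (fun β => ((derivative g).map k).eval β ^ h.natDegree)).prod := by
      refine congrArg Multiset.prod (Multiset.map_congr rfl ?_)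
      intro β _
      have hconst : ∀ x ∈ (hb - Polynomial.C β).roots,
          ((derivative g).map k).eval (hb.eval x) = ((derivative g).map k).eval β := by
        intro x hx
        have hx' : (hb - Polynomial.C β).eval x = 0 := Polynomial.isRoot_of_mem_roots hx
        have hxx : hb.eval x = β := by
          rw [Polynomial.eval_sub, Polynomial.eval_C, sub_eq_zero] at hx'
          exact hx'
        rw [hxx]
      rw [Multiset.map_congr rfl hconst, Multiset.map_const', Multiset.prod_replicate, hcardhb β]
    exact step3.trans Multiset.prod_map_pow
  -- nonvanishing of mapped leading coefficients
  have hkf : k f.leadingCoeff ≠ 0 := fun hc => hflc (hkinj (by rw [hc, map_zero]))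
  have hkg : k g.leadingCoeff ≠ 0 := fun hc => hglc (hkinj (by rw [hc, map_zero]))
  -- the constant
  refine ⟨f.leadingCoeff ^ (derivative f).natDegree
    * (g.leadingCoeff ^ ((derivative g).natDegree * h.natDegree)
      * f.leadingCoeff ^ (derivative h).natDegree)⁻¹, ?_, ?_⟩
  · exact mul_ne_zero (pow_ne_zero _ hflc)
      (inv_ne_zero (mul_ne_zero (pow_ne_zero _ hglc) (pow_ne_zero _ hflc)))
  · apply hφinj
    rw [_root_.map_mul, _root_.map_mul, map_pow, hres1, hres2, hres3]
    have hφC : ∀ a : K, φ (Polynomial.C a) = k a := fun a => rfl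
    rw [hφC, r1, r2, r3, hsplit]
    rw [_root_.map_mul, map_inv₀, _root_.map_mul, map_pow, map_pow, map_pow]
    rw [mul_pow, ← pow_mul]
    have hD : k g.leadingCoeff ^ ((derivative g).natDegree * h.natDegree)
        * k f.leadingCoeff ^ (derivative h).natDegree ≠ 0 :=
      mul_ne_zero (pow_ne_zero _ hkg) (pow_ne_zero _ hkf)
    have e := inv_mul_cancel₀ hD
    linear_combination (-(k f.leadingCoeff ^ (derivative f).natDegree
      * (Multiset.map (fun x => eval x (Polynomial.map k (derivative h))) Fp.roots).prod
      * (Multiset.map (fun β => eval β (Polynomial.map k (derivative g))) Gp.roots).prod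
        ^ h.natDegree)) * e
end
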